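/- arXiv:1607.05735 — 6 statements merged into one kernel-verified Lean document; each statement's English description precedes it below -/
import Mathlib

section
/- Let ρ and σ be density matrices on ℂ^n and let α > 1. Then the Hilbert α-divergence satisfies H_α(ρ‖σ) ≥ 0, with equality H_α(ρ‖σ) = 0 if and only if ρ = σ. -/
open scoped ComplexOrder

/-- `sup_α(ρ/σ) = sup { Tr[Eρ]/Tr[Eσ] : α⁻¹·𝟙 ≤ E ≤ 𝟙 }`, where the operator
inequalities mean that `E - α⁻¹𝟙` and `𝟙 - E` are positive semidefinite. -/
noncomputable def supAlpha {n : ℕ} (α : ℝ) (ρ σ : Matrix (Fin n) (Fin n) ℂ) : ℝ :=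
  sSup { x : ℝ | ∃ E : Matrix (Fin n) (Fin n) ℂ,
    (E - ((α⁻¹ : ℝ) : ℂ) • (1 : Matrix (Fin n) (Fin n) ℂ)).PosSemidef ∧
    ((1 : Matrix (Fin n) (Fin n) ℂ) - E).PosSemidef ∧
    x = ((E * ρ).trace.re) / ((E * σ).trace.re) }

/-- The Hilbert α-divergence `H_α(ρ‖σ) = (α/(α-1))·log₂ sup_α(ρ/σ)`. -/
noncomputable def HAlpha {n : ℕ} (α : ℝ) (ρ σ : Matrix (Fin n) (Fin n) ℂ) : ℝ :=
  (α / (α - 1)) * Real.logb 2 (supAlpha α ρ σ)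

section HilAux
variable {n : ℕ}

lemma hil_trace_nonneg {A : Matrix (Fin n) (Fin n) ℂ} (hA : A.PosSemidef) :
    0 ≤ A.trace := by
  rw [Matrix.trace]
  apply Finset.sum_nonneg
  intro i _
  have := hA.diag_nonneg (i := i)
  simpa using this

lemma hil_trace_mul_nonneg {A B : Matrix (Fin n) (Fin n) ℂ}
    (hA : A.PosSemidef) (hB : B.PosSemidef) : 0 ≤ (A * B).trace := by
  obtain ⟨X, rfl⟩ : ∃ X : Matrix (Fin n) (Fin n) ℂ, A = star X * X := by
    open scoped MatrixOrder in
    exact CStarAlgebra.nonneg_iff_eq_star_mul_self.mp hA.nonneg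
  rw [mul_assoc, Matrix.trace_mul_comm]
  have h := hB.mul_mul_conjTranspose_same X
  rw [← Matrix.star_eq_conjTranspose] at h
  exact hil_trace_nonneg h

lemma hil_smul_one_psd {c : ℝ} (hc : 0 ≤ c) :
    (((c : ℂ)) • (1 : Matrix (Fin n) (Fin n) ℂ)).PosSemidef := by
  rw [Matrix.smul_one_eq_diagonal]
  exact Matrix.posSemidef_diagonal_iff.mpr fun i => Complex.zero_le_real.mpr hc

lemma hil_den_lb {σ E : Matrix (Fin n) (Fin n) ℂ} (hσ : σ.PosSemidef)
    (hσtr : σ.trace = 1) {c : ℝ}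
    (hE1 : (E - ((c : ℝ) : ℂ) • (1 : Matrix (Fin n) (Fin n) ℂ)).PosSemidef) :
    c ≤ ((E * σ).trace).re := by
  have h := hil_trace_mul_nonneg hE1 hσ
  have heq : (E - ((c : ℝ) : ℂ) • (1 : Matrix (Fin n) (Fin n) ℂ)) * σ
      = E * σ - (c : ℂ) • σ := by
    rw [Matrix.sub_mul, Matrix.smul_mul, Matrix.one_mul]
  rw [heq, Matrix.trace_sub, Matrix.trace_smul, hσtr] at h
  have := (Complex.le_def.mp h).1
  simpa using this

lemma hil_num_ub {ρ E : Matrix (Fin n) (Fin n) ℂ} (hρ : ρ.PosSemidef)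
    (hρtr : ρ.trace = 1)
    (hE2 : ((1 : Matrix (Fin n) (Fin n) ℂ) - E).PosSemidef) :
    ((E * ρ).trace).re ≤ 1 := by
  have h := hil_trace_mul_nonneg hE2 hρ
  rw [Matrix.sub_mul, Matrix.one_mul, Matrix.trace_sub, hρtr] at h
  have := (Complex.le_def.mp h).1
  simpa using this

lemma hil_exists_gt {ρ σ : Matrix (Fin n) (Fin n) ℂ}
    (hρ : ρ.PosSemidef) (hρtr : ρ.trace = 1)
    (hσ : σ.PosSemidef) (hσtr : σ.trace = 1)
    (hne : ρ ≠ σ) {α : ℝ} (hα : 1 < α) :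
    ∃ E : Matrix (Fin n) (Fin n) ℂ,
      (E - ((α⁻¹ : ℝ) : ℂ) • (1 : Matrix (Fin n) (Fin n) ℂ)).PosSemidef ∧
      ((1 : Matrix (Fin n) (Fin n) ℂ) - E).PosSemidef ∧
      1 < ((E * ρ).trace).re / ((E * σ).trace).re := by
  have hα0 : (0:ℝ) < α := lt_trans one_pos hα
  have hinv0 : (0:ℝ) < α⁻¹ := inv_pos.mpr hα0
  have hinv1 : α⁻¹ < 1 := by
    rw [inv_lt_one_iff₀]; right; exact hα
  set Δ := ρ - σ with hΔdef
  have hΔH : Δ.IsHermitian := hρ.1.sub hσ.1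
  set U : Matrix (Fin n) (Fin n) ℂ := (hΔH.eigenvectorUnitary : Matrix (Fin n) (Fin n) ℂ) with hUdef
  set μ := hΔH.eigenvalues with hμdef
  have hspec : Δ = U * Matrix.diagonal (RCLike.ofReal ∘ μ) * star U :=
    hΔH.spectral_theorem
  have hUU : U * star U = 1 := Unitary.coe_mul_star_self _
  have hUU' : star U * U = 1 := Unitary.coe_star_mul_self _
  have htr : ∀ D : Matrix (Fin n) (Fin n) ℂ, (U * D * star U).trace = D.trace := by
    intro D
    rw [Matrix.trace_mul_cycle, hUU', one_mul]
  have hmul : ∀ D1 D2 : Matrix (Fin n) (Fin n) ℂ,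
      (U * D1 * star U) * (U * D2 * star U) = U * (D1 * D2) * star U := by
    intro D1 D2
    calc (U * D1 * star U) * (U * D2 * star U)
        = U * (D1 * ((star U * U) * (D2 * star U))) := by simp only [mul_assoc]
      _ = U * (D1 * D2) * star U := by rw [hUU', one_mul]; simp only [mul_assoc]
  -- sum of eigenvalues is zero
  have hΔtr : Δ.trace = 0 := by
    rw [hΔdef, Matrix.trace_sub, hρtr, hσtr, sub_self]
  have hsummu : ∑ i, μ i = 0 := by
    have h1 : Δ.trace = ∑ i, ((μ i : ℝ) : ℂ) := by
      rw [hspec, htr, Matrix.trace_diagonal]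
      simp [RCLike.ofReal]
    rw [hΔtr] at h1
    have := congrArg Complex.re h1.symm
    simpa using this
  -- there is a positive eigenvalue
  have hΔne : Δ ≠ 0 := sub_ne_zero.mpr hne
  have hexpos : ∃ i, 0 < μ i := by
    by_contra hcon
    push_neg at hcon
    have hall : ∀ i ∈ Finset.univ, μ i = 0 :=
      (Finset.sum_eq_zero_iff_of_nonpos (fun i _ => hcon i)).mp hsummu
    apply hΔne
    rw [hspec]
    have : Matrix.diagonal (RCLike.ofReal ∘ μ) = (0 : Matrix (Fin n) (Fin n) ℂ) := by
      ext i k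
      rcases eq_or_ne i k with h | h
      · subst h
        simp [hall i (Finset.mem_univ i)]
      · simp [Matrix.diagonal_apply_ne _ h]
    rw [this, mul_zero, zero_mul]
  obtain ⟨j, hj⟩ := hexpos
  -- the operator E
  set e : Fin n → ℝ := fun i => if 0 < μ i then 1 else α⁻¹ with hedef
  set E : Matrix (Fin n) (Fin n) ℂ :=
    U * Matrix.diagonal (RCLike.ofReal ∘ e) * star U with hEdef
  have hsmul1 : ∀ c : ℂ, c • (1 : Matrix (Fin n) (Fin n) ℂ)
      = U * (c • 1) * star U := by
    intro c
    rw [Matrix.mul_smul, mul_one, Matrix.smul_mul, hUU]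
  have hpsd_diag : ∀ d : Fin n → ℝ, (∀ i, 0 ≤ d i) →
      (U * Matrix.diagonal (RCLike.ofReal ∘ d) * star U).PosSemidef := by
    intro d hd
    have hD : (Matrix.diagonal (RCLike.ofReal ∘ d) :
        Matrix (Fin n) (Fin n) ℂ).PosSemidef :=
      Matrix.posSemidef_diagonal_iff.mpr fun i => by
        simpa [RCLike.ofReal] using Complex.zero_le_real.mpr (hd i)
    have := hD.mul_mul_conjTranspose_same U
    rwa [← Matrix.star_eq_conjTranspose] at this
  -- condition 1
  have hc1 : (E - ((α⁻¹ : ℝ) : ℂ) • (1 : Matrix (Fin n) (Fin n) ℂ)).PosSemidef := by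
    have heq : E - ((α⁻¹ : ℝ) : ℂ) • (1 : Matrix (Fin n) (Fin n) ℂ)
        = U * Matrix.diagonal (RCLike.ofReal ∘ (fun i => e i - α⁻¹)) * star U := by
      rw [hEdef, hsmul1, ← Matrix.sub_mul, ← Matrix.mul_sub]
      congr 2
      rw [Matrix.smul_one_eq_diagonal, Matrix.diagonal_sub]
      ext i k
      rcases eq_or_ne i k with h | h
      · subst h
        simp only [Matrix.diagonal_apply_eq, Function.comp_apply]
        show ((e i : ℝ) : ℂ) - ((α⁻¹ : ℝ) : ℂ) = ((e i - α⁻¹ : ℝ) : ℂ)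
        push_cast
        ring
      · simp [Matrix.diagonal_apply_ne _ h]
    rw [heq]
    exact hpsd_diag _ fun i => by
      rw [hedef]; dsimp only
      split
      · linarith
      · simp
  -- condition 2
  have hc2 : ((1 : Matrix (Fin n) (Fin n) ℂ) - E).PosSemidef := by
    have h1 : (1 : Matrix (Fin n) (Fin n) ℂ) = U * 1 * star U := by
      rw [mul_one, hUU]
    have heq : (1 : Matrix (Fin n) (Fin n) ℂ) - E
        = U * Matrix.diagonal (RCLike.ofReal ∘ (fun i => 1 - e i)) * star U := by
      rw [hEdef]
      nth_rewrite 1 [h1]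
      rw [← Matrix.sub_mul, ← Matrix.mul_sub]
      congr 2
      rw [← Matrix.diagonal_one, Matrix.diagonal_sub]
      ext i k
      rcases eq_or_ne i k with h | h
      · subst h
        simp only [Matrix.diagonal_apply_eq, Function.comp_apply]
        show (1 : ℂ) - ((e i : ℝ) : ℂ) = ((1 - e i : ℝ) : ℂ)
        push_cast
        ring
      · simp [Matrix.diagonal_apply_ne _ h]
    rw [heq]
    exact hpsd_diag _ fun i => by
      rw [hedef]; dsimp only
      split
      · simp
      · linarith
  -- trace of E * Δ
  have htrEΔ : (E * Δ).trace = ∑ i, ((e i * μ i : ℝ) : ℂ) := by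
    rw [hEdef, hspec, hmul, htr, Matrix.diagonal_mul_diagonal, Matrix.trace_diagonal]
    simp [RCLike.ofReal]
  set s : ℝ := ∑ i, (if 0 < μ i then μ i else 0) with hsdef
  have hspos : 0 < s := by
    rw [hsdef]
    apply Finset.sum_pos'
    · intro i _
      split
      · linarith
      · exact le_rfl
    · exact ⟨j, Finset.mem_univ j, by simp [hj]⟩
  have htval : ∑ i, e i * μ i = (1 - α⁻¹) * s := by
    rw [hsdef, Finset.mul_sum]
    have : ∀ i, e i * μ i = α⁻¹ * μ i + (1 - α⁻¹) * (if 0 < μ i then μ i else 0) := by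
      intro i
      rw [hedef]; dsimp only
      split <;> ring
    rw [Finset.sum_congr rfl fun i _ => this i, Finset.sum_add_distrib,
      ← Finset.mul_sum, hsummu, mul_zero, zero_add]
  have htpos : 0 < ∑ i, e i * μ i := by
    rw [htval]; exact mul_pos (by linarith) hspos
  -- trace relations
  have hden : α⁻¹ ≤ ((E * σ).trace).re := by
    exact hil_den_lb hσ hσtr hc1
  have hden0 : 0 < ((E * σ).trace).re := lt_of_lt_of_le hinv0 hden
  have hnum : ((E * ρ).trace).re = (∑ i, e i * μ i) + ((E * σ).trace).re := by
    have h1 : E * ρ = E * Δ + E * σ := by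
      rw [hΔdef, Matrix.mul_sub]; abel
    rw [h1, Matrix.trace_add, Complex.add_re, htrEΔ]
    congr 1
    simp
  refine ⟨E, hc1, hc2, ?_⟩
  rw [hnum, lt_div_iff₀ hden0, one_mul]
  linarith

end HilAux

/-- For density matrices `ρ, σ` on `ℂ^n` and `α > 1`, the Hilbert α-divergence is
nonnegative, and it vanishes if and only if `ρ = σ`. -/
theorem hilbert_alpha_divergence_nonneg_and_eq_zero_iff
    {n : ℕ} (ρ σ : Matrix (Fin n) (Fin n) ℂ)
    (hρ : ρ.PosSemidef) (hρtr : ρ.trace = 1)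
    (hσ : σ.PosSemidef) (hσtr : σ.trace = 1)
    (α : ℝ) (hα : 1 < α) :
    0 ≤ HAlpha α ρ σ ∧ (HAlpha α ρ σ = 0 ↔ ρ = σ) := by
  have hα0 : (0:ℝ) < α := lt_trans one_pos hα
  have hinv0 : (0:ℝ) < α⁻¹ := inv_pos.mpr hα0
  have hinv1 : α⁻¹ < 1 := by rw [inv_lt_one_iff₀]; right; exact hα
  set S : Set ℝ := { x : ℝ | ∃ E : Matrix (Fin n) (Fin n) ℂ,
    (E - ((α⁻¹ : ℝ) : ℂ) • (1 : Matrix (Fin n) (Fin n) ℂ)).PosSemidef ∧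
    ((1 : Matrix (Fin n) (Fin n) ℂ) - E).PosSemidef ∧
    x = ((E * ρ).trace.re) / ((E * σ).trace.re) } with hS
  have hsupS : supAlpha α ρ σ = sSup S := rfl
  have mem1 : (1 : ℝ) ∈ S := by
    refine ⟨1, ?_, ?_, ?_⟩
    · have h1 : (1 : Matrix (Fin n) (Fin n) ℂ) - ((α⁻¹ : ℝ) : ℂ) • 1
          = (((1 - α⁻¹ : ℝ) : ℂ)) • (1 : Matrix (Fin n) (Fin n) ℂ) := by
        push_cast
        rw [sub_smul, one_smul]
      rw [h1]
      exact hil_smul_one_psd (by linarith)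
    · rw [sub_self]
      exact Matrix.PosSemidef.zero
    · rw [Matrix.one_mul, Matrix.one_mul, hρtr, hσtr]
      norm_num
  have bdd : BddAbove S := by
    refine ⟨α, ?_⟩
    rintro x ⟨E, hE1, hE2, rfl⟩
    have hd : α⁻¹ ≤ ((E * σ).trace).re := hil_den_lb hσ hσtr hE1
    have hd0 : 0 < ((E * σ).trace).re := lt_of_lt_of_le hinv0 hd
    have hn : ((E * ρ).trace).re ≤ 1 := hil_num_ub hρ hρtr hE2
    rw [div_le_iff₀ hd0]
    calc ((E * ρ).trace).re ≤ 1 := hn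
      _ = α * α⁻¹ := (mul_inv_cancel₀ hα0.ne').symm
      _ ≤ α * ((E * σ).trace).re := mul_le_mul_of_nonneg_left hd hα0.le
  have hsup1 : (1:ℝ) ≤ sSup S := le_csSup bdd mem1
  have hcoef : (0:ℝ) < α / (α - 1) := div_pos hα0 (by linarith)
  constructor
  · rw [HAlpha, hsupS]
    exact mul_nonneg hcoef.le (Real.logb_nonneg one_lt_two hsup1)
  constructor
  · intro h0
    by_contra hne
    obtain ⟨E, hE1, hE2, hgt⟩ := hil_exists_gt hρ hρtr hσ hσtr hne hα
    have hmem : ((E * ρ).trace).re / ((E * σ).trace).re ∈ S := ⟨E, hE1, hE2, rfl⟩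
    have hsx : 1 < sSup S := lt_of_lt_of_le hgt (le_csSup bdd hmem)
    have hpos : 0 < HAlpha α ρ σ := by
      rw [HAlpha, hsupS]
      exact mul_pos hcoef (Real.logb_pos one_lt_two hsx)
    rw [h0] at hpos
    exact lt_irrefl _ hpos
  · intro h
    subst h
    have hle : sSup S ≤ 1 := by
      apply csSup_le ⟨1, mem1⟩
      rintro x ⟨E, hE1, hE2, rfl⟩
      have hd0 : 0 < ((E * ρ).trace).re :=
        lt_of_lt_of_le hinv0 (hil_den_lb hσ hσtr hE1)
      exact le_of_eq (div_self hd0.ne')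
    have heq1 : sSup S = 1 := le_antisymm hle hsup1
    rw [HAlpha, hsupS, heq1, Real.logb_one, mul_zero]
end

section
/- Let ρ and σ be density matrices on ℂ^n, let α > 1, and let Φ be a (not necessarily completely) positive, trace-preserving linear map from n×n complex matrices to m×m complex matrices. Then the data-processing inequality holds: H_α(Φ(ρ)‖Φ(σ)) ≤ H_α(ρ‖σ). -/
open scoped ComplexOrder

namespace HilbertAuxDP

open Matrix

variable {k : ℕ}

noncomputable def outer {k : ℕ} (u : Fin k → ℂ) : Matrix (Fin k) (Fin k) ℂ :=
  Matrix.of fun a b => u a * star (u b)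

lemma outer_posSemidef (u : Fin k → ℂ) : (outer u).PosSemidef := by
  rw [posSemidef_iff_dotProduct_mulVec]
  constructor
  · ext a b
    simp [conjTranspose_apply, outer, StarMul.star_mul, star_star, mul_comm]
  · intro x
    have h : star x ⬝ᵥ (outer u) *ᵥ x
        = star (∑ b, star (u b) * x b) * (∑ b, star (u b) * x b) := by
      simp only [dotProduct, mulVec, outer, Matrix.of_apply, star_sum, StarMul.star_mul, star_star,
        Pi.star_apply, Finset.sum_mul, Finset.mul_sum]
      rw [Finset.sum_comm]
      exact Finset.sum_congr rfl fun a _ => Finset.sum_congr rfl fun b _ => by ring_nf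
    rw [h]
    exact star_mul_self_nonneg _

lemma outer_smul (c : ℂ) (u : Fin k → ℂ) : outer (c • u) = (c * star c) • outer u := by
  ext a b
  simp only [outer, Matrix.of_apply, Pi.smul_apply, smul_eq_mul, StarMul.star_mul, Matrix.smul_apply]
  ring

lemma trace_nonneg' {A : Matrix (Fin k) (Fin k) ℂ} (hA : A.PosSemidef) : 0 ≤ A.trace := by
  rw [Matrix.trace]
  refine Finset.sum_nonneg fun i _ => ?_
  have := hA.dotProduct_mulVec_nonneg (Pi.single i 1)
  simpa [dotProduct, mulVec, Pi.single_apply, Matrix.diag] using this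

lemma trace_mul_nonneg' {A B : Matrix (Fin k) (Fin k) ℂ} (hA : A.PosSemidef)
    (hB : B.PosSemidef) : 0 ≤ (A * B).trace := by
  open scoped MatrixOrder in
  obtain ⟨C, rfl⟩ := CStarAlgebra.nonneg_iff_eq_star_mul_self.mp hA.nonneg
  rw [Matrix.mul_assoc, Matrix.trace_mul_comm]
  exact trace_nonneg' (hB.mul_mul_conjTranspose_same C)

lemma quadForm_eq_trace (M : Matrix (Fin k) (Fin k) ℂ) (x : Fin k → ℂ) :
    star x ⬝ᵥ M *ᵥ x = (M * outer x).trace := by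
  simp only [dotProduct, mulVec, outer, Matrix.trace, Matrix.diag, Matrix.mul_apply,
    Matrix.of_apply, Pi.star_apply, Finset.mul_sum]
  exact Finset.sum_congr rfl fun a _ => Finset.sum_congr rfl fun b _ => by ring

lemma smul_one_posSemidef {r : ℝ} (hr : 0 ≤ r) :
    (((r : ℂ)) • (1 : Matrix (Fin k) (Fin k) ℂ)).PosSemidef := by
  rw [posSemidef_iff_dotProduct_mulVec]
  constructor
  · simp [Matrix.IsHermitian, conjTranspose_smul, Complex.star_def, Complex.conj_ofReal]
  · intro x
    rw [smul_mulVec, one_mulVec, dotProduct_smul]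
    exact smul_nonneg (by exact_mod_cast Complex.zero_le_real.mpr hr) (dotProduct_star_self_nonneg x)

def ev (i : Fin k) : Fin k → ℂ := Pi.single i 1

def w (i j : Fin k) (c : ℂ) : Fin k → ℂ := ev i + c • ev j

lemma w_apply (i j : Fin k) (c : ℂ) (a : Fin k) :
    w i j c a = (if i = a then 1 else 0) + c * (if j = a then 1 else 0) := by
  simp [w, ev, Pi.single_apply, eq_comm]

lemma polarization (i j : Fin k) :
    Matrix.single i j (1:ℂ) =
      (4:ℂ)⁻¹ • (outer (w i j 1)
        + Complex.I • outer (w i j Complex.I)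
        + (-1:ℂ) • outer (w i j (-1))
        + (-Complex.I) • outer (w i j (-Complex.I))) := by
  ext a b
  simp only [outer, Matrix.of_apply, Matrix.smul_apply, Matrix.add_apply, smul_eq_mul,
    w_apply, Matrix.single, _root_.map_add, _root_.map_mul, _root_.map_one, _root_.map_zero, _root_.map_neg,
    Complex.star_def, Complex.conj_I, apply_ite (starRingEnd ℂ)]
  by_cases hia : i = a <;> by_cases hja : j = a <;> by_cases hib : i = b <;>
    by_cases hjb : j = b <;>
    simp only [hia, hja, hib, hjb, if_pos, if_neg, if_true, if_false, eq_self_iff_true,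
      not_false_iff] <;> simp_all <;> ring_nf

lemma trace_re_bounds {α : ℝ} (hα : 1 < α) {E τ : Matrix (Fin k) (Fin k) ℂ}
    (hτ : τ.PosSemidef) (hτtr : τ.trace = 1)
    (hE1 : (E - ((α⁻¹ : ℝ) : ℂ) • (1 : Matrix (Fin k) (Fin k) ℂ)).PosSemidef)
    (hE2 : ((1 : Matrix (Fin k) (Fin k) ℂ) - E).PosSemidef) :
    α⁻¹ ≤ (E * τ).trace.re ∧ (E * τ).trace.re ≤ 1 := by
  have h1 : 0 ≤ (((1 : Matrix (Fin k) (Fin k) ℂ) - E) * τ).trace := trace_mul_nonneg' hE2 hτ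
  have h2 : 0 ≤ ((E - ((α⁻¹ : ℝ) : ℂ) • (1 : Matrix (Fin k) (Fin k) ℂ)) * τ).trace :=
    trace_mul_nonneg' hE1 hτ
  rw [Matrix.sub_mul, Matrix.trace_sub, Matrix.one_mul, hτtr] at h1
  rw [Matrix.sub_mul, Matrix.trace_sub, Matrix.smul_mul, Matrix.trace_smul, Matrix.one_mul,
    hτtr] at h2
  rw [Complex.le_def] at h1 h2
  constructor
  · have := h1.1
    have := h2.1
    simp only [Complex.zero_re, Complex.sub_re, Complex.one_re, Complex.smul_re,
      Complex.ofReal_re, smul_eq_mul, mul_one] at *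
    linarith
  · have := h1.1
    simp only [Complex.zero_re, Complex.sub_re, Complex.one_re] at this
    linarith

end HilbertAuxDP


open Matrix HilbertAuxDP in
/-- Data-processing inequality for the Hilbert α-divergences: for density matrices
`ρ, σ` on `ℂ^n`, `α > 1`, and any positive (not necessarily completely positive)
trace-preserving linear map `Φ`, we have `H_α(Φ(ρ)‖Φ(σ)) ≤ H_α(ρ‖σ)`. -/
theorem hilbert_alpha_divergence_data_processing
    {n m : ℕ} (ρ σ : Matrix (Fin n) (Fin n) ℂ)
    (hρ : ρ.PosSemidef) (hρtr : ρ.trace = 1)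
    (hσ : σ.PosSemidef) (hσtr : σ.trace = 1)
    (Φ : Matrix (Fin n) (Fin n) ℂ →ₗ[ℂ] Matrix (Fin m) (Fin m) ℂ)
    (hΦpos : ∀ A : Matrix (Fin n) (Fin n) ℂ, A.PosSemidef → (Φ A).PosSemidef)
    (hΦtr : ∀ A : Matrix (Fin n) (Fin n) ℂ, (Φ A).trace = A.trace)
    (α : ℝ) (hα : 1 < α) :
    HAlpha α (Φ ρ) (Φ σ) ≤ HAlpha α ρ σ := by
  classical
  have hα0 : (0:ℝ) < α := lt_trans one_pos hα
  -- the adjoint map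
  set Ψ : Matrix (Fin m) (Fin m) ℂ → Matrix (Fin n) (Fin n) ℂ :=
    fun E => Matrix.of fun i j => (E * Φ (Matrix.single j i 1)).trace with hΨdef
  have pairing : ∀ (E : Matrix (Fin m) (Fin m) ℂ) (A : Matrix (Fin n) (Fin n) ℂ),
      (Ψ E * A).trace = (E * Φ A).trace := by
    intro E A
    have lhs : (Ψ E * A).trace
        = ∑ p, ∑ q, A p q * (E * Φ (Matrix.single p q 1)).trace := by
      simp only [Matrix.trace, Matrix.diag, Matrix.mul_apply, hΨdef, Matrix.of_apply]
      rw [Finset.sum_comm]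
      exact Finset.sum_congr rfl fun p _ => Finset.sum_congr rfl fun q _ => by ring
    have rhs : (E * Φ A).trace
        = ∑ p, ∑ q, A p q * (E * Φ (Matrix.single p q 1)).trace := by
      conv_lhs => rw [matrix_eq_sum_single A]
      rw [map_sum, Finset.mul_sum, Matrix.trace_sum]
      refine Finset.sum_congr rfl fun p _ => ?_
      rw [map_sum, Finset.mul_sum, Matrix.trace_sum]
      refine Finset.sum_congr rfl fun q _ => ?_
      rw [show Matrix.single p q (A p q) = A p q • Matrix.single p q (1:ℂ) by simp,
        Φ.map_smul, Matrix.mul_smul, Matrix.trace_smul, smul_eq_mul]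
    rw [lhs, rhs]
  have houter : ∀ u : Fin n → ℂ, (Φ (outer u))ᴴ = Φ (outer u) :=
    fun u => (hΦpos _ (outer_posSemidef u)).1
  have hwconj : ∀ (i j : Fin n), (Φ (Matrix.single i j (1:ℂ)))ᴴ = Φ (Matrix.single j i 1) := by
    intro i j
    have h1 : w j i 1 = w i j 1 := by
      funext a
      simp only [w, ev, Pi.add_apply, Pi.smul_apply, smul_eq_mul, one_mul]
      ring
    have h2 : w j i Complex.I = Complex.I • w i j (-Complex.I) := by
      funext a
      simp only [w, ev, Pi.add_apply, Pi.smul_apply, smul_eq_mul]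
      ring_nf
      try simp [Complex.I_sq]
      try ring
    have h3 : w j i (-1) = (-1 : ℂ) • w i j (-1) := by
      funext a
      simp only [w, ev, Pi.add_apply, Pi.smul_apply, smul_eq_mul]
      ring
    have h4 : w j i (-Complex.I) = (-Complex.I) • w i j Complex.I := by
      funext a
      simp only [w, ev, Pi.add_apply, Pi.smul_apply, smul_eq_mul]
      ring_nf
      try simp [Complex.I_sq]
      try ring
    rw [polarization i j, polarization j i, h1, h2, h3, h4, outer_smul, outer_smul, outer_smul]
    simp only [_root_.map_smul, _root_.map_add, conjTranspose_smul, conjTranspose_add, houter,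
      Complex.star_def, Complex.conj_I, map_inv₀, map_ofNat, _root_.map_neg, _root_.map_one,
      Complex.I_mul_I, neg_mul, neg_neg, one_smul, mul_neg, one_mul, mul_one,
      Complex.conj_ofNat]
    module
  have hΨherm : ∀ E : Matrix (Fin m) (Fin m) ℂ, E.IsHermitian → (Ψ E).IsHermitian := by
    intro E hE
    ext i j
    simp only [conjTranspose_apply, hΨdef, Matrix.of_apply]
    calc star (E * Φ (Matrix.single i j 1)).trace
        = ((E * Φ (Matrix.single i j 1))ᴴ).trace := (Matrix.trace_conjTranspose _).symm
      _ = ((Φ (Matrix.single i j 1))ᴴ * Eᴴ).trace := by rw [conjTranspose_mul]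
      _ = (E * Φ (Matrix.single j i 1)).trace := by
          rw [hwconj, hE.eq, Matrix.trace_mul_comm]
  have hΨpos : ∀ E : Matrix (Fin m) (Fin m) ℂ, E.PosSemidef → (Ψ E).PosSemidef := by
    intro E hE
    refine posSemidef_iff_dotProduct_mulVec.mpr ⟨hΨherm E hE.1, fun x => ?_⟩
    rw [quadForm_eq_trace, pairing]
    exact trace_mul_nonneg' hE (hΦpos _ (outer_posSemidef x))
  have hΨone : Ψ (1 : Matrix (Fin m) (Fin m) ℂ) = 1 := by
    ext i j
    simp only [hΨdef, Matrix.of_apply, Matrix.one_mul, hΦtr]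
    by_cases h : i = j
    · subst h; simp [Matrix.trace_single_eq_same, Matrix.one_apply]
    · rw [Matrix.trace_single_eq_of_ne (h := Ne.symm h), Matrix.one_apply_ne h]
  have hΨsub : ∀ E F : Matrix (Fin m) (Fin m) ℂ, Ψ (E - F) = Ψ E - Ψ F := by
    intro E F
    ext i j
    simp [hΨdef, Matrix.sub_mul]
  have hΨsmul : ∀ (c : ℂ) (E : Matrix (Fin m) (Fin m) ℂ), Ψ (c • E) = c • Ψ E := by
    intro c E
    ext i j
    simp [hΨdef, Matrix.smul_mul]
  -- the two sets
  set S : Set ℝ := { x : ℝ | ∃ E : Matrix (Fin n) (Fin n) ℂ,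
    (E - ((α⁻¹ : ℝ) : ℂ) • (1 : Matrix (Fin n) (Fin n) ℂ)).PosSemidef ∧
    ((1 : Matrix (Fin n) (Fin n) ℂ) - E).PosSemidef ∧
    x = ((E * ρ).trace.re) / ((E * σ).trace.re) } with hSdef
  set T : Set ℝ := { x : ℝ | ∃ E : Matrix (Fin m) (Fin m) ℂ,
    (E - ((α⁻¹ : ℝ) : ℂ) • (1 : Matrix (Fin m) (Fin m) ℂ)).PosSemidef ∧
    ((1 : Matrix (Fin m) (Fin m) ℂ) - E).PosSemidef ∧
    x = ((E * (Φ ρ)).trace.re) / ((E * (Φ σ)).trace.re) } with hTdef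
  have hTS : T ⊆ S := by
    rintro x ⟨E, hE1, hE2, rfl⟩
    refine ⟨Ψ E, ?_, ?_, ?_⟩
    · have : Ψ E - ((α⁻¹ : ℝ) : ℂ) • (1 : Matrix (Fin n) (Fin n) ℂ)
          = Ψ (E - ((α⁻¹ : ℝ) : ℂ) • (1 : Matrix (Fin m) (Fin m) ℂ)) := by
        rw [hΨsub, hΨsmul, hΨone]
      rw [this]
      exact hΨpos _ hE1
    · have : (1 : Matrix (Fin n) (Fin n) ℂ) - Ψ E
          = Ψ ((1 : Matrix (Fin m) (Fin m) ℂ) - E) := by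
        rw [hΨsub, hΨone]
      rw [this]
      exact hΨpos _ hE2
    · rw [pairing, pairing]
  have hΦρ : (Φ ρ).PosSemidef := hΦpos _ hρ
  have hΦσ : (Φ σ).PosSemidef := hΦpos _ hσ
  have hΦρtr : (Φ ρ).trace = 1 := by rw [hΦtr, hρtr]
  have hΦσtr : (Φ σ).trace = 1 := by rw [hΦtr, hσtr]
  -- S is bounded above by α
  have hSbdd : BddAbove S := by
    refine ⟨α, fun x hx => ?_⟩
    obtain ⟨E, hE1, hE2, rfl⟩ := hx
    obtain ⟨hρlo, hρhi⟩ := trace_re_bounds hα hρ hρtr hE1 hE2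
    obtain ⟨hσlo, hσhi⟩ := trace_re_bounds hα hσ hσtr hE1 hE2
    have hσpos : 0 < ((E * σ).trace.re) := lt_of_lt_of_le (by positivity) hσlo
    rw [div_le_iff₀ hσpos]
    calc ((E * ρ).trace.re) ≤ 1 := hρhi
      _ = α * α⁻¹ := by field_simp
      _ ≤ α * ((E * σ).trace.re) := by
          exact mul_le_mul_of_nonneg_left hσlo (le_of_lt hα0)
  -- `1 ∈ S` and `1 ∈ T` via `E = 1`
  have hone : ∀ (k : ℕ) (τ : Matrix (Fin k) (Fin k) ℂ), τ.trace = 1 →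
      (((1 : Matrix (Fin k) (Fin k) ℂ) * τ).trace.re) = 1 := by
    intro k τ hτ
    rw [Matrix.one_mul, hτ]
    simp
  have honemem : ∀ (k : ℕ),
      ((1 : Matrix (Fin k) (Fin k) ℂ) - ((α⁻¹ : ℝ) : ℂ) • (1 : Matrix (Fin k) (Fin k) ℂ)).PosSemidef
      ∧ ((1 : Matrix (Fin k) (Fin k) ℂ) - (1 : Matrix (Fin k) (Fin k) ℂ)).PosSemidef := by
    intro k
    constructor
    · have : (1 : Matrix (Fin k) (Fin k) ℂ) - ((α⁻¹ : ℝ) : ℂ) • (1 : Matrix (Fin k) (Fin k) ℂ)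
          = (((1 - α⁻¹ : ℝ)) : ℂ) • (1 : Matrix (Fin k) (Fin k) ℂ) := by
        push_cast
        rw [sub_smul, one_smul]
      rw [this]
      exact smul_one_posSemidef (by
        have : α⁻¹ ≤ 1 := by
          rw [inv_le_one_iff₀]; right; exact le_of_lt hα
        linarith)
    · rw [sub_self]
      exact Matrix.PosSemidef.zero
  have h1S : (1 : ℝ) ∈ S := by
    refine ⟨1, (honemem n).1, (honemem n).2, ?_⟩
    rw [hone n ρ hρtr, hone n σ hσtr]
    norm_num
  have h1T : (1 : ℝ) ∈ T := by
    refine ⟨1, (honemem m).1, (honemem m).2, ?_⟩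
    rw [hone m (Φ ρ) hΦρtr, hone m (Φ σ) hΦσtr]
    norm_num
  have hTbdd : BddAbove T := hSbdd.mono hTS
  have hsupS : (1:ℝ) ≤ sSup S := le_csSup hSbdd h1S
  have hsupT : (1:ℝ) ≤ sSup T := le_csSup hTbdd h1T
  have hle : sSup T ≤ sSup S := csSup_le_csSup hSbdd ⟨1, h1T⟩ hTS
  have hsupeqS : supAlpha α ρ σ = sSup S := rfl
  have hsupeqT : supAlpha α (Φ ρ) (Φ σ) = sSup T := rfl
  unfold HAlpha
  rw [hsupeqS, hsupeqT]
  have hcoef : 0 ≤ α / (α - 1) := by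
    apply div_nonneg (le_of_lt hα0)
    linarith
  refine mul_le_mul_of_nonneg_left ?_ hcoef
  exact Real.logb_le_logb_of_le (by norm_num) (lt_of_lt_of_le one_pos hsupT) hle
end

section
/- Let ρ and σ be density matrices on ℂ^n with σ positive definite. Then lim_{α→∞} H_α(ρ‖σ) = D_max(ρ‖σ), where D_max(ρ‖σ) := log₂ inf{ λ ∈ ℝ : λσ − ρ is positive semidefinite } is the max-relative entropy. -/
open scoped ComplexOrder

/-- The max-relative entropy `D_max(ρ‖σ) = log₂ inf { λ ∈ ℝ : λσ - ρ ≥ 0 }`. -/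
noncomputable def Dmax {n : ℕ} (ρ σ : Matrix (Fin n) (Fin n) ℂ) : ℝ :=
  Real.logb 2 (sInf { lam : ℝ | ((lam : ℂ) • σ - ρ).PosSemidef })

namespace HilbertAux

open Matrix

lemma psd_smul_real {n : ℕ} {A : Matrix (Fin n) (Fin n) ℂ} (hA : A.PosSemidef) {c : ℝ}
    (hc : 0 ≤ c) : (((c : ℝ) : ℂ) • A).PosSemidef := by
  refine PosSemidef.of_dotProduct_mulVec_nonneg ?_ ?_
  · unfold Matrix.IsHermitian
    rw [conjTranspose_smul, hA.1.eq, Complex.star_def, Complex.conj_ofReal]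
  · intro x
    rw [smul_mulVec, dotProduct_smul, smul_eq_mul]
    exact mul_nonneg (by exact_mod_cast hc) (hA.dotProduct_mulVec_nonneg x)

lemma trace_psd_nonneg {n : ℕ} {A : Matrix (Fin n) (Fin n) ℂ} (hA : A.PosSemidef) :
    0 ≤ A.trace := by
  rw [Matrix.trace]
  refine Finset.sum_nonneg fun i _ => ?_
  have := hA.dotProduct_mulVec_nonneg (Pi.single i 1)
  simpa [dotProduct, Matrix.mulVec, Pi.single_apply, Finset.sum_ite_eq] using this

lemma posSemidef_iff_eq_transpose_mul_self {n : ℕ} {A : Matrix (Fin n) (Fin n) ℂ} :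
    A.PosSemidef ↔ ∃ B : Matrix (Fin n) (Fin n) ℂ, A = Bᴴ * B := by
  open scoped MatrixOrder in
  constructor
  · intro hA
    obtain ⟨B, hB⟩ := CStarAlgebra.nonneg_iff_eq_star_mul_self.mp hA.nonneg
    exact ⟨B, hB⟩
  · rintro ⟨B, rfl⟩
    exact posSemidef_conjTranspose_mul_self B

lemma trace_mul_psd_nonneg {n : ℕ} {A B : Matrix (Fin n) (Fin n) ℂ} (hA : A.PosSemidef)
    (hB : B.PosSemidef) : 0 ≤ (A * B).trace := by
  obtain ⟨C, rfl⟩ := posSemidef_iff_eq_transpose_mul_self.mp hA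
  rw [Matrix.mul_assoc, Matrix.trace_mul_comm]
  exact trace_psd_nonneg (by simpa [Matrix.mul_assoc] using hB.mul_mul_conjTranspose_same C)

lemma vmv_herm {n : ℕ} (v : Fin n → ℂ) : (vecMulVec v (star v)).IsHermitian := by
  ext i j
  simp [Matrix.conjTranspose_apply, vecMulVec_apply, mul_comm]

lemma vmv_mul_vmv {n : ℕ} (v : Fin n → ℂ) (hv : star v ⬝ᵥ v = 1) :
    vecMulVec v (star v) * vecMulVec v (star v) = vecMulVec v (star v) := by
  ext i j
  simp only [Matrix.mul_apply, vecMulVec_apply, Pi.star_apply]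
  have : ∑ k, v i * (star (v k)) * (v k * star (v j))
      = (v i * star (v j)) * (∑ k, star (v k) * v k) := by
    rw [Finset.mul_sum]; congr 1; ext k; ring
  rw [this, show (∑ k, star (v k) * v k) = star v ⬝ᵥ v from rfl, hv, mul_one]

lemma vmv_psd {n : ℕ} (v : Fin n → ℂ) (hv : star v ⬝ᵥ v = 1) :
    (vecMulVec v (star v)).PosSemidef := by
  rw [posSemidef_iff_eq_transpose_mul_self]
  exact ⟨vecMulVec v (star v), by rw [(vmv_herm v).eq, vmv_mul_vmv v hv]⟩

lemma one_sub_vmv_psd {n : ℕ} (v : Fin n → ℂ) (hv : star v ⬝ᵥ v = 1) :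
    ((1 : Matrix (Fin n) (Fin n) ℂ) - vecMulVec v (star v)).PosSemidef := by
  rw [posSemidef_iff_eq_transpose_mul_self]
  refine ⟨1 - vecMulVec v (star v), ?_⟩
  have h1 : ((1 : Matrix (Fin n) (Fin n) ℂ) - vecMulVec v (star v))ᴴ
      = 1 - vecMulVec v (star v) := by
    rw [conjTranspose_sub, conjTranspose_one, (vmv_herm v).eq]
  rw [h1, Matrix.sub_mul, Matrix.mul_sub, Matrix.mul_sub, vmv_mul_vmv v hv]
  simp only [Matrix.one_mul, Matrix.mul_one]
  abel

lemma trace_vmv_mul {n : ℕ} (v : Fin n → ℂ) (A : Matrix (Fin n) (Fin n) ℂ) :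
    (vecMulVec v (star v) * A).trace = star v ⬝ᵥ A *ᵥ v := by
  simp only [Matrix.trace, Matrix.diag, Matrix.mul_apply, vecMulVec_apply, Pi.star_apply,
    dotProduct, Matrix.mulVec, Finset.mul_sum]
  rw [Finset.sum_comm]
  congr 1; ext j
  congr 1; ext i
  ring

lemma herm_quad_real {n : ℕ} {A : Matrix (Fin n) (Fin n) ℂ} (hA : A.IsHermitian)
    (x : Fin n → ℂ) : star x ⬝ᵥ A *ᵥ x = (((star x ⬝ᵥ A *ᵥ x).re : ℝ) : ℂ) := by
  have h : star (star x ⬝ᵥ A *ᵥ x) = star x ⬝ᵥ A *ᵥ x := by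
    rw [← star_dotProduct, star_mulVec, ← dotProduct_mulVec, hA.eq]
  exact (Complex.conj_eq_iff_re.mp h).symm

lemma quad_smul {n : ℕ} (A : Matrix (Fin n) (Fin n) ℂ) (r : ℝ) (x : Fin n → ℂ) :
    star (((r : ℂ)) • x) ⬝ᵥ A *ᵥ (((r : ℂ)) • x) = ((r : ℂ)) ^ 2 * (star x ⬝ᵥ A *ᵥ x) := by
  rw [star_smul, A.mulVec_smul, smul_dotProduct, dotProduct_smul]
  simp only [smul_eq_mul, star_trivial, Complex.star_def, Complex.conj_ofReal]
  ring

lemma norm_sq_eq {n : ℕ} (x : EuclideanSpace ℂ (Fin n)) :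
    star x ⬝ᵥ x = ((‖x‖ ^ 2 : ℝ) : ℂ) := by
  rw [EuclideanSpace.norm_eq, Real.sq_sqrt (Finset.sum_nonneg fun i _ => sq_nonneg _)]
  push_cast
  simp only [dotProduct, Pi.star_apply]
  congr 1; ext i
  rw [Complex.star_def, mul_comm, Complex.mul_conj']

end HilbertAux

/-- For density matrices `ρ, σ` on `ℂ^n` with `σ` positive definite,
`lim_{α→∞} H_α(ρ‖σ) = D_max(ρ‖σ)`. -/
theorem hilbert_alpha_divergence_tendsto_Dmax
    {n : ℕ} (ρ σ : Matrix (Fin n) (Fin n) ℂ)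
    (hρ : ρ.PosSemidef) (hρtr : ρ.trace = 1)
    (hσ : σ.PosSemidef) (hσtr : σ.trace = 1) (hσpd : σ.PosDef) :
    Filter.Tendsto (fun α : ℝ => HAlpha α ρ σ) Filter.atTop (nhds (Dmax ρ σ)) := by
  classical
  open Matrix HilbertAux in
  -- n is positive
  have hn : 0 < n := by
    rcases Nat.eq_zero_or_pos n with rfl | hn
    · simp [Matrix.trace] at hρtr
    · exact hn
  -- quadratic forms
  set qρ : (Fin n → ℂ) → ℝ := fun x => (star x ⬝ᵥ ρ *ᵥ x).re with hqρdef
  set qσ : (Fin n → ℂ) → ℝ := fun x => (star x ⬝ᵥ σ *ᵥ x).re with hqσdef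
  have hqρ0 : ∀ x, 0 ≤ qρ x := fun x => by
    have := (Complex.le_def.mp (hρ.dotProduct_mulVec_nonneg x)).1; simpa using this
  have hqσ0 : ∀ x, 0 ≤ qσ x := fun x => by
    have := (Complex.le_def.mp (hσ.dotProduct_mulVec_nonneg x)).1; simpa using this
  have hqσpos : ∀ x : Fin n → ℂ, x ≠ 0 → 0 < qσ x := fun x hx => by
    have := (Complex.lt_def.mp (hσpd.dotProduct_mulVec_pos hx)).1; simpa using this
  -- continuity
  have hcρ : Continuous fun x : EuclideanSpace ℂ (Fin n) => qρ x := by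
    simp only [hqρdef, dotProduct, Matrix.mulVec]; fun_prop
  have hcσ : Continuous fun x : EuclideanSpace ℂ (Fin n) => qσ x := by
    simp only [hqσdef, dotProduct, Matrix.mulVec]; fun_prop
  -- maximize Rayleigh quotient on the sphere
  set S := Metric.sphere (0 : EuclideanSpace ℂ (Fin n)) 1 with hSdef
  have hSne : S.Nonempty := by
    haveI : NeZero n := ⟨hn.ne'⟩
    exact ⟨EuclideanSpace.single ⟨0, hn⟩ 1, by
      simp [hSdef, mem_sphere_iff_norm, EuclideanSpace.norm_single]⟩
  have hSnz : ∀ x ∈ S, (x : Fin n → ℂ) ≠ 0 := by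
    intro x hx h0
    have : ‖x‖ = 1 := mem_sphere_zero_iff_norm.mp hx
    rw [show x = (0 : EuclideanSpace ℂ (Fin n)) from (WithLp.ofLp_eq_zero 2).mp h0] at this
    simp at this
  obtain ⟨v, hvS, hvmax⟩ := (isCompact_sphere _ _).exists_isMaxOn hSne
    ((hcρ.continuousOn).div (hcσ.continuousOn) fun x hx => (hqσpos x (hSnz x hx)).ne')
  have hvnorm : ‖v‖ = 1 := mem_sphere_zero_iff_norm.mp hvS
  have hvunit : star (v : Fin n → ℂ) ⬝ᵥ (v : Fin n → ℂ) = 1 := by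
    rw [HilbertAux.norm_sq_eq v, hvnorm]; norm_num
  set a := qρ v with hadef
  set b := qσ v with hbdef
  have hb : 0 < b := hqσpos v (hSnz v hvS)
  set M := a / b with hMdef
  have hab : a = M * b := by rw [hMdef, div_mul_cancel₀ a hb.ne']
  -- key inequality: qρ x ≤ M * qσ x for all x
  have key : ∀ x : Fin n → ℂ, qρ x ≤ M * qσ x := by
    intro x
    by_cases hx : x = 0
    · subst hx; simp [hqρdef, hqσdef]
    · set xE : EuclideanSpace ℂ (Fin n) := (WithLp.equiv 2 (Fin n → ℂ)).symm x with hxEdef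
      have hxE0 : xE ≠ 0 := by
        intro h
        exact hx (by simpa [hxEdef] using congrArg (WithLp.equiv 2 (Fin n → ℂ)) h)
      set r : ℝ := ‖xE‖ with hrdef
      have hr : 0 < r := norm_pos_iff.mpr hxE0
      set u : Fin n → ℂ := ((r⁻¹ : ℝ) : ℂ) • x with hudef
      set uE : EuclideanSpace ℂ (Fin n) := (WithLp.equiv 2 (Fin n → ℂ)).symm u with huEdef
      have huE : uE = ((r⁻¹ : ℝ) : ℂ) • xE := rfl
      have huS : uE ∈ S := by
        rw [hSdef, mem_sphere_zero_iff_norm, huE, norm_smul]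
        simp only [Complex.norm_real, Real.norm_eq_abs, abs_of_pos (inv_pos.mpr hr), ← hrdef]
        field_simp
      have hu0 : u ≠ 0 := by
        rw [hudef]
        exact smul_ne_zero (by simp [hr.ne']) hx
      have hqu : qρ u / qσ u ≤ M := hvmax huS
      have hqu' : qρ u ≤ M * qσ u := by
        rw [div_le_iff₀ (hqσpos u hu0)] at hqu
        linarith [hqu]
      have hxu : x = ((r : ℝ) : ℂ) • u := by
        rw [hudef, smul_smul]
        have : ((r : ℂ)) * ((r⁻¹ : ℝ) : ℂ) = 1 := by
          push_cast
          field_simp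
        rw [this, one_smul]
      have hsq : ((r : ℂ)) ^ 2 = (((r ^ 2 : ℝ)) : ℂ) := by push_cast; ring
      have hscaleρ : qρ x = r ^ 2 * qρ u := by
        show (star x ⬝ᵥ ρ *ᵥ x).re = r ^ 2 * (star u ⬝ᵥ ρ *ᵥ u).re
        conv_lhs => rw [hxu]
        rw [quad_smul, hsq, Complex.re_ofReal_mul]
      have hscaleσ : qσ x = r ^ 2 * qσ u := by
        show (star x ⬝ᵥ σ *ᵥ x).re = r ^ 2 * (star u ⬝ᵥ σ *ᵥ u).re
        conv_lhs => rw [hxu]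
        rw [quad_smul, hsq, Complex.re_ofReal_mul]
      rw [hscaleρ, hscaleσ]
      calc r ^ 2 * qρ u ≤ r ^ 2 * (M * qσ u) := by
            exact mul_le_mul_of_nonneg_left hqu' (sq_nonneg r)
        _ = M * (r ^ 2 * qσ u) := by ring
  -- characterization of the Dmax set
  have hSset : { lam : ℝ | ((lam : ℂ) • σ - ρ).PosSemidef } = Set.Ici M := by
    ext lam
    simp only [Set.mem_setOf_eq, Set.mem_Ici]
    constructor
    · intro hpsd
      have h2 := hpsd.dotProduct_mulVec_nonneg (v : Fin n → ℂ)
      rw [Matrix.sub_mulVec, Matrix.smul_mulVec, dotProduct_sub, dotProduct_smul,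
        herm_quad_real hσ.1 v, herm_quad_real hρ.1 v, smul_eq_mul,
        ← Complex.ofReal_mul, ← Complex.ofReal_sub, Complex.zero_le_real] at h2
      rw [hMdef, div_le_iff₀ hb]
      have ha' : (star (v : Fin n → ℂ) ⬝ᵥ ρ *ᵥ (v : Fin n → ℂ)).re = a := rfl
      have hb' : (star (v : Fin n → ℂ) ⬝ᵥ σ *ᵥ (v : Fin n → ℂ)).re = b := rfl
      rw [ha', hb'] at h2
      linarith
    · intro hlam
      refine PosSemidef.of_dotProduct_mulVec_nonneg ?_ ?_
      · unfold Matrix.IsHermitian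
        rw [conjTranspose_sub, conjTranspose_smul, hσ.1.eq, hρ.1.eq, Complex.star_def,
          Complex.conj_ofReal]
      · intro x
        rw [Matrix.sub_mulVec, Matrix.smul_mulVec, dotProduct_sub, dotProduct_smul]
        rw [herm_quad_real hσ.1 x, herm_quad_real hρ.1 x]
        rw [smul_eq_mul, ← Complex.ofReal_mul, ← Complex.ofReal_sub]
        rw [Complex.zero_le_real]
        have h1 : qρ x ≤ M * qσ x := key x
        have h2 : M * qσ x ≤ lam * qσ x := mul_le_mul_of_nonneg_right hlam (hqσ0 x)
        have : qρ x ≤ lam * qσ x := le_trans h1 h2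
        rw [hqρdef, hqσdef] at this
        linarith
  have hMinf : sInf { lam : ℝ | ((lam : ℂ) • σ - ρ).PosSemidef } = M := by
    rw [hSset]; exact csInf_Ici
  have hMpsd : (((M : ℝ) : ℂ) • σ - ρ).PosSemidef := by
    have : M ∈ Set.Ici M := Set.self_mem_Ici
    rw [← hSset] at this
    exact this
  have hM1 : 1 ≤ M := by
    have h0 := trace_psd_nonneg hMpsd
    rw [Matrix.trace_sub, Matrix.trace_smul, hσtr, hρtr] at h0
    have := (Complex.le_def.mp h0).1
    simp only [Complex.sub_re, Complex.zero_re, smul_eq_mul, mul_one, Complex.one_re] at this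
    have : 0 ≤ (((M : ℝ) : ℂ)).re - 1 := by simpa using this
    simpa using this
  have hMpos : 0 < M := lt_of_lt_of_le one_pos hM1
  -- the supAlpha set
  set SA : ℝ → Set ℝ := fun α => { x : ℝ | ∃ E : Matrix (Fin n) (Fin n) ℂ,
    (E - ((α⁻¹ : ℝ) : ℂ) • (1 : Matrix (Fin n) (Fin n) ℂ)).PosSemidef ∧
    ((1 : Matrix (Fin n) (Fin n) ℂ) - E).PosSemidef ∧
    x = ((E * ρ).trace.re) / ((E * σ).trace.re) } with hSAdef
  have hsup : ∀ α : ℝ, supAlpha α ρ σ = sSup (SA α) := fun α => rfl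
  -- the lower-bound function
  set g : ℝ → ℝ := fun α => (α⁻¹ + (1 - α⁻¹) * a) / (α⁻¹ + (1 - α⁻¹) * b) with hgdef
  -- bounds on elements of SA α for α > 1
  have hub : ∀ α : ℝ, 1 < α → ∀ x ∈ SA α, x ≤ M := by
    rintro α hα x ⟨E, hE1, hE2, rfl⟩
    have hαpos : 0 < α := lt_trans one_pos hα
    have hinv : 0 < α⁻¹ := inv_pos.mpr hαpos
    have hEpsd : E.PosSemidef := by
      have := hE1.add (psd_smul_real Matrix.PosSemidef.one hinv.le)
      simpa using this
    have hdnn : α⁻¹ ≤ ((E * σ).trace).re := by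
      have h1 := trace_mul_psd_nonneg hE1 hσ
      rw [Matrix.sub_mul, Matrix.smul_mul, Matrix.one_mul, Matrix.trace_sub,
        Matrix.trace_smul, hσtr] at h1
      have := (Complex.le_def.mp h1).1
      simp only [Complex.sub_re, Complex.zero_re, smul_eq_mul, mul_one] at this
      have h2 : (((α⁻¹ : ℝ) : ℂ)).re = α⁻¹ := Complex.ofReal_re _
      linarith [this, h2.le, h2.ge]
    have hd0 : 0 < ((E * σ).trace).re := lt_of_lt_of_le hinv hdnn
    have hnum : ((E * ρ).trace).re ≤ M * ((E * σ).trace).re := by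
      have h2 := trace_mul_psd_nonneg hEpsd hMpsd
      rw [Matrix.mul_sub, Matrix.mul_smul, Matrix.trace_sub, Matrix.trace_smul] at h2
      have := (Complex.le_def.mp h2).1
      simp only [Complex.sub_re, Complex.zero_re, smul_eq_mul, Complex.mul_re,
        Complex.ofReal_re, Complex.ofReal_im, zero_mul, sub_zero] at this
      nlinarith [this]
    rw [div_le_iff₀ hd0]
    linarith
  have hbddA : ∀ α : ℝ, 1 < α → BddAbove (SA α) := fun α hα => ⟨M, fun x hx => hub α hα x hx⟩
  have honeA : ∀ α : ℝ, 1 < α → (1 : ℝ) ∈ SA α := by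
    intro α hα
    have hαpos : 0 < α := lt_trans one_pos hα
    have hinvle : α⁻¹ ≤ 1 := by
      rw [inv_le_one_iff₀]; right; exact hα.le
    refine ⟨1, ?_, ?_, ?_⟩
    · have : (1 : Matrix (Fin n) (Fin n) ℂ) - ((α⁻¹ : ℝ) : ℂ) • 1
          = (((1 - α⁻¹ : ℝ)) : ℂ) • (1 : Matrix (Fin n) (Fin n) ℂ) := by
        rw [Complex.ofReal_sub, Complex.ofReal_one, sub_smul, one_smul]
      rw [this]
      exact psd_smul_real Matrix.PosSemidef.one (by linarith)
    · simpa using Matrix.PosSemidef.zero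
    · rw [Matrix.one_mul, Matrix.one_mul, hρtr, hσtr]
      norm_num
  have hgA : ∀ α : ℝ, 1 < α → g α ∈ SA α := by
    intro α hα
    have hαpos : 0 < α := lt_trans one_pos hα
    have hinv : 0 < α⁻¹ := inv_pos.mpr hαpos
    have hinvle : α⁻¹ ≤ 1 := by
      rw [inv_le_one_iff₀]; right; exact hα.le
    set P := Matrix.vecMulVec (v : Fin n → ℂ) (star (v : Fin n → ℂ)) with hPdef
    set E := ((α⁻¹ : ℝ) : ℂ) • (1 : Matrix (Fin n) (Fin n) ℂ) + (((1 - α⁻¹ : ℝ)) : ℂ) • P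
      with hEdef
    have htrρ : ((E * ρ).trace).re = α⁻¹ + (1 - α⁻¹) * a := by
      rw [hEdef, Matrix.add_mul, Matrix.smul_mul, Matrix.smul_mul, Matrix.one_mul,
        Matrix.trace_add, Matrix.trace_smul, Matrix.trace_smul, hρtr, trace_vmv_mul]
      simp only [smul_eq_mul, mul_one, Complex.add_re, Complex.mul_re, Complex.ofReal_re,
        Complex.ofReal_im, zero_mul, sub_zero]
      rfl
    have htrσ : ((E * σ).trace).re = α⁻¹ + (1 - α⁻¹) * b := by
      rw [hEdef, Matrix.add_mul, Matrix.smul_mul, Matrix.smul_mul, Matrix.one_mul,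
        Matrix.trace_add, Matrix.trace_smul, Matrix.trace_smul, hσtr, trace_vmv_mul]
      simp only [smul_eq_mul, mul_one, Complex.add_re, Complex.mul_re, Complex.ofReal_re,
        Complex.ofReal_im, zero_mul, sub_zero]
      rfl
    refine ⟨E, ?_, ?_, ?_⟩
    · have : E - ((α⁻¹ : ℝ) : ℂ) • (1 : Matrix (Fin n) (Fin n) ℂ)
          = (((1 - α⁻¹ : ℝ)) : ℂ) • P := by
        rw [hEdef, add_sub_cancel_left]
      rw [this]
      exact psd_smul_real (vmv_psd _ hvunit) (by linarith)
    · have : (1 : Matrix (Fin n) (Fin n) ℂ) - E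
          = (((1 - α⁻¹ : ℝ)) : ℂ) • ((1 : Matrix (Fin n) (Fin n) ℂ) - P) := by
        rw [hEdef, Complex.ofReal_sub, Complex.ofReal_one]
        module
      rw [this]
      exact psd_smul_real (one_sub_vmv_psd _ hvunit) (by linarith)
    · rw [htrρ, htrσ, hgdef]
  -- limit facts
  have hgt : Filter.Tendsto g Filter.atTop (nhds M) := by
    have hc : ContinuousAt (fun t : ℝ => (t + (1 - t) * a) / (t + (1 - t) * b)) 0 := by
      apply ContinuousAt.div
      · fun_prop
      · fun_prop
      · simpa using hb.ne'
    have := hc.tendsto.comp tendsto_inv_atTop_zero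
    simp only [Function.comp_def] at this
    have heq : ((0 : ℝ) + (1 - 0) * a) / ((0 : ℝ) + (1 - 0) * b) = M := by
      rw [hMdef]; norm_num
    rw [heq] at this
    exact this
  have hratio : Filter.Tendsto (fun α : ℝ => α / (α - 1)) Filter.atTop (nhds 1) := by
    have h1 : Filter.Tendsto (fun α : ℝ => 1 + (α - 1)⁻¹) Filter.atTop (nhds 1) := by
      have h2 : Filter.Tendsto (fun α : ℝ => (α - 1)) Filter.atTop Filter.atTop :=
        Filter.tendsto_atTop_add_const_right _ (-1) Filter.tendsto_id
      have h3 := h2.inv_tendsto_atTop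
      have := Filter.Tendsto.add (tendsto_const_nhds (x := (1:ℝ))) h3
      simpa using this
    refine Filter.Tendsto.congr' ?_ h1
    filter_upwards [Filter.eventually_gt_atTop 1] with α hα
    have hα1 : α - 1 ≠ 0 := by linarith
    field_simp
    ring
  -- limits of the bounding functions
  have hlogg : Filter.Tendsto (fun α : ℝ => Real.logb 2 (g α)) Filter.atTop
      (nhds (Real.logb 2 M)) := by
    simp only [Real.logb]
    exact (hgt.log hMpos.ne').div_const _
  have hL : Filter.Tendsto (fun α : ℝ => (α / (α - 1)) * Real.logb 2 (g α)) Filter.atTop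
      (nhds (Real.logb 2 M)) := by
    have := hratio.mul hlogg
    simpa using this
  have hU : Filter.Tendsto (fun α : ℝ => (α / (α - 1)) * Real.logb 2 M) Filter.atTop
      (nhds (Real.logb 2 M)) := by
    have := hratio.mul_const (Real.logb 2 M)
    simpa using this
  -- eventual positivity of g
  have hgpos : ∀ᶠ α : ℝ in Filter.atTop, 0 < g α := hgt.eventually (eventually_gt_nhds hMpos)
  -- squeeze
  have hgoal : Filter.Tendsto (fun α : ℝ => HAlpha α ρ σ) Filter.atTop
      (nhds (Real.logb 2 M)) := by
    apply tendsto_of_tendsto_of_tendsto_of_le_of_le' hL hU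
    · filter_upwards [Filter.eventually_gt_atTop 1, hgpos] with α hα hgα
      have hratpos : 0 < α / (α - 1) := div_pos (lt_trans one_pos hα) (by linarith)
      have hsle : g α ≤ supAlpha α ρ σ := by
        rw [hsup α]
        exact le_csSup (hbddA α hα) (hgA α hα)
      have : Real.logb 2 (g α) ≤ Real.logb 2 (supAlpha α ρ σ) :=
        Real.logb_le_logb_of_le one_lt_two hgα hsle
      unfold HAlpha
      exact mul_le_mul_of_nonneg_left this hratpos.le
    · filter_upwards [Filter.eventually_gt_atTop 1] with α hα
      have hratpos : 0 < α / (α - 1) := div_pos (lt_trans one_pos hα) (by linarith)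
      have hs1 : (1 : ℝ) ≤ supAlpha α ρ σ := by
        rw [hsup α]
        exact le_csSup (hbddA α hα) (honeA α hα)
      have hsM : supAlpha α ρ σ ≤ M := by
        rw [hsup α]
        exact csSup_le ⟨1, honeA α hα⟩ fun x hx => hub α hα x hx
      have : Real.logb 2 (supAlpha α ρ σ) ≤ Real.logb 2 M :=
        Real.logb_le_logb_of_le one_lt_two (lt_of_lt_of_le one_pos hs1) hsM
      unfold HAlpha
      exact mul_le_mul_of_nonneg_left this hratpos.le
  have hD : Dmax ρ σ = Real.logb 2 M := by
    unfold Dmax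
    rw [hMinf]
  rw [hD]
  exact hgoal
end

section
/- Let ρ and σ be density matrices on ℂ^n. Then lim_{α→1⁺} H_α(ρ‖σ) = (1/(2 ln 2))·‖ρ − σ‖₁, where ‖·‖₁ denotes the trace norm. -/
open scoped ComplexOrder

/-- The trace norm of a matrix, `‖A‖₁ = Tr[√(AᴴA)]` (for Hermitian `A` this is
`Tr[A₊] + Tr[A₋]`, the sum of the absolute values of the eigenvalues). -/
noncomputable def traceNorm {n : ℕ} (A : Matrix (Fin n) (Fin n) ℂ) : ℝ :=
  (((Matrix.posSemidef_conjTranspose_mul_self A).isHermitian.eigenvectorUnitary :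
      Matrix (Fin n) (Fin n) ℂ) *
    Matrix.diagonal (fun i => ((Real.sqrt
      ((Matrix.posSemidef_conjTranspose_mul_self A).isHermitian.eigenvalues i) : ℝ) : ℂ)) *
    (star (Matrix.posSemidef_conjTranspose_mul_self A).isHermitian.eigenvectorUnitary :
      Matrix (Fin n) (Fin n) ℂ)).trace.re

open Matrix

namespace HilbertAux
variable {n : ℕ} {A : Matrix (Fin n) (Fin n) ℂ}

noncomputable def mf (hA : A.IsHermitian) (f : ℝ → ℝ) : Matrix (Fin n) (Fin n) ℂ :=
  (hA.eigenvectorUnitary : Matrix (Fin n) (Fin n) ℂ) *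
    Matrix.diagonal (fun i => ((f (hA.eigenvalues i) : ℝ) : ℂ)) *
    star (hA.eigenvectorUnitary : Matrix (Fin n) (Fin n) ℂ)

lemma mf_id (hA : A.IsHermitian) : mf hA id = A := by
  rw [mf]; exact hA.spectral_theorem.symm

lemma mf_one (hA : A.IsHermitian) : mf hA (fun _ => 1) = 1 := by
  rw [mf]
  simp only [Complex.ofReal_one]
  rw [Matrix.diagonal_one, mul_one]
  exact Matrix.mem_unitaryGroup_iff.mp hA.eigenvectorUnitary.2

lemma mf_mul (hA : A.IsHermitian) (f g : ℝ → ℝ) :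
    mf hA f * mf hA g = mf hA (fun x => f x * g x) := by
  have h1 : star (hA.eigenvectorUnitary : Matrix (Fin n) (Fin n) ℂ) *
      (hA.eigenvectorUnitary : Matrix (Fin n) (Fin n) ℂ) = 1 :=
    Matrix.mem_unitaryGroup_iff'.mp hA.eigenvectorUnitary.2
  rw [mf, mf, mf]
  simp only [mul_assoc]
  rw [← mul_assoc (star (hA.eigenvectorUnitary : Matrix (Fin n) (Fin n) ℂ)), h1, one_mul,
    ← mul_assoc (Matrix.diagonal _), Matrix.diagonal_mul_diagonal]
  push_cast
  rfl

lemma mf_sub (hA : A.IsHermitian) (f g : ℝ → ℝ) :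
    mf hA f - mf hA g = mf hA (fun x => f x - g x) := by
  rw [mf, mf, mf, ← Matrix.sub_mul, ← Matrix.mul_sub, Matrix.diagonal_sub]
  push_cast
  rfl

lemma mf_add (hA : A.IsHermitian) (f g : ℝ → ℝ) :
    mf hA f + mf hA g = mf hA (fun x => f x + g x) := by
  rw [mf, mf, mf, ← Matrix.add_mul, ← Matrix.mul_add, Matrix.diagonal_add]
  push_cast
  rfl

lemma mf_smul (hA : A.IsHermitian) (r : ℝ) (f : ℝ → ℝ) :
    (r : ℂ) • mf hA f = mf hA (fun x => r * f x) := by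
  rw [mf, mf, ← smul_mul_assoc, ← mul_smul_comm]
  congr 2
  ext i j
  by_cases h : i = j <;>
    simp [Matrix.diagonal_apply, h, Complex.real_smul, Complex.ofReal_mul]

lemma mf_posSemidef (hA : A.IsHermitian) {f : ℝ → ℝ} (hf : ∀ x, 0 ≤ f x) :
    (mf hA f).PosSemidef := by
  have : (Matrix.diagonal (fun i => ((f (hA.eigenvalues i) : ℝ) : ℂ))).PosSemidef := by
    refine Matrix.posSemidef_diagonal_iff.mpr fun i => ?_
    exact_mod_cast Complex.zero_le_real.mpr (hf _)
  simpa [Matrix.star_eq_conjTranspose, mf] using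
    this.mul_mul_conjTranspose_same (hA.eigenvectorUnitary : Matrix (Fin n) (Fin n) ℂ)

lemma mf_trace (hA : A.IsHermitian) (f : ℝ → ℝ) :
    (mf hA f).trace = ((∑ i, f (hA.eigenvalues i) : ℝ) : ℂ) := by
  have h1 : star (hA.eigenvectorUnitary : Matrix (Fin n) (Fin n) ℂ) *
      (hA.eigenvectorUnitary : Matrix (Fin n) (Fin n) ℂ) = 1 :=
    Matrix.mem_unitaryGroup_iff'.mp hA.eigenvectorUnitary.2
  rw [mf, Matrix.trace_mul_cycle, h1, one_mul, Matrix.trace_diagonal]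
  push_cast
  rfl

lemma trace_re_nonneg {P : Matrix (Fin n) (Fin n) ℂ} (hP : P.PosSemidef) :
    0 ≤ P.trace.re := by
  rw [Matrix.trace, Complex.re_sum]
  refine Finset.sum_nonneg fun i _ => ?_
  have := hP.re_dotProduct_nonneg (Pi.single i 1)
  simpa [dotProduct, Matrix.mulVec_single, Pi.single_apply, Finset.sum_ite_eq,
    Matrix.diag] using this

lemma trace_mul_re_nonneg {P Q : Matrix (Fin n) (Fin n) ℂ}
    (hP : P.PosSemidef) (hQ : Q.PosSemidef) : 0 ≤ (P * Q).trace.re := by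
  set R := mf hP.1 Real.sqrt with hRdef
  have hS : R.PosSemidef := mf_posSemidef hP.1 (fun x => Real.sqrt_nonneg x)
  have hR : R * R = P := by
    rw [hRdef, mf_mul]
    conv_rhs => rw [← mf_id hP.1]
    simp only [mf, id, (fun i => Real.mul_self_sqrt (hP.eigenvalues_nonneg i))]
  have h1 : P * Q = R * (R * Q) := by rw [← mul_assoc, hR]
  have h2 : (P * Q).trace = (R * Q * Rᴴ).trace := by
    rw [h1, Matrix.trace_mul_cycle, ← mul_assoc, hS.1.eq]
  rw [h2]
  exact trace_re_nonneg (hQ.mul_mul_conjTranspose_same R)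

lemma tendsto_log_one_add_div (T : ℝ) :
    Filter.Tendsto (fun x : ℝ => Real.log (1 + T * x) / x)
      (nhdsWithin 0 (Set.Ioi 0)) (nhds T) := by
  have hD : HasDerivAt (fun x : ℝ => Real.log (1 + T * x)) T 0 := by
    have h1 : HasDerivAt (fun x : ℝ => 1 + T * x) T 0 := by
      simpa using ((hasDerivAt_id (0:ℝ)).const_mul T).const_add 1
    have h2 := (Real.hasDerivAt_log (by norm_num : (1 : ℝ) + T * 0 ≠ 0)).comp 0 h1
    simpa [Function.comp_def] using h2
  have h3 := hasDerivWithinAt_iff_tendsto_slope.mp (hD.hasDerivWithinAt (s := Set.Ioi 0))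
  have h4 : Filter.Tendsto (slope (fun x : ℝ => Real.log (1 + T * x)) 0)
      (nhdsWithin 0 (Set.Ioi 0)) (nhds T) := by
    refine h3.mono_left (nhdsWithin_mono 0 ?_)
    intro x hx
    exact ⟨hx, ne_of_gt hx⟩
  refine h4.congr (fun x => ?_)
  simp [slope_def_field, div_eq_mul_inv, mul_comm]

variable (ρ σ : Matrix (Fin n) (Fin n) ℂ)

variable {n : ℕ} (ρ σ : Matrix (Fin n) (Fin n) ℂ)

/-- half the trace norm: sum of positive eigenvalues of ρ - σ -/
noncomputable def Tval (h : (ρ - σ).IsHermitian) : ℝ :=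
  ∑ i, max (h.eigenvalues i) 0

variable {ρ σ}

lemma Tval_nonneg (h : (ρ - σ).IsHermitian) : 0 ≤ Tval ρ σ h :=
  Finset.sum_nonneg fun i _ => le_max_right _ _

lemma traceNorm_eq_two_Tval (h : (ρ - σ).IsHermitian)
    (hρtr : ρ.trace = 1) (hσtr : σ.trace = 1) :
    traceNorm (ρ - σ) = 2 * Tval ρ σ h := by
  set A := ρ - σ with hAdef
  have hsum : ∑ i, h.eigenvalues i = 0 := by
    have h1 : A.trace = 0 := by rw [hAdef, Matrix.trace_sub, hρtr, hσtr, sub_self]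
    have h2 : (mf h id).trace = ((∑ i, h.eigenvalues i : ℝ) : ℂ) := by
      simpa using mf_trace h id
    rw [mf_id h, h1] at h2
    exact_mod_cast h2.symm
  -- the sqrt of AᴴA is mf h |·|
  have habs : (mf h (fun x => |x|)).PosSemidef := mf_posSemidef h fun x => abs_nonneg x
  have hAA : A * A = mf h (fun x => x * x) := by
    have h2 := mf_mul h id id
    simp only [id] at h2
    rw [mf_id h] at h2
    exact h2
  have hsq : (mf h (fun x => |x|)) ^ 2 = Aᴴ * A := by
    rw [pow_two, mf_mul, h.eq, hAA]
    congr 1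
    funext x
    simp [abs_mul_abs_self]
  have hc : ∀ {M : Matrix (Fin n) (Fin n) ℂ} (hM : M.IsHermitian) (f : ℝ → ℝ),
      mf hM f = cfc f M := by
    intro M hM f
    rw [hM.cfc_eq, Matrix.IsHermitian.cfc, Unitary.conjStarAlgAut_apply]
    rfl
  have hsqrt : mf h (fun x => |x|) =
      mf (Matrix.posSemidef_conjTranspose_mul_self A).isHermitian Real.sqrt := by
    rw [hc h, hc (Matrix.posSemidef_conjTranspose_mul_self A).isHermitian, h.eq, hAA, hc h,
      ← cfc_comp' Real.sqrt (fun x => x * x) _ (ha := h.isSelfAdjoint)]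
    simp only [Real.sqrt_mul_self_eq_abs]
  rw [traceNorm]
  show (mf (Matrix.posSemidef_conjTranspose_mul_self A).isHermitian Real.sqrt).trace.re = _
  rw [← hsqrt, mf_trace]
  rw [Complex.ofReal_re]
  have : ∀ x : ℝ, |x| = 2 * max x 0 - x := by
    intro x
    rcases le_or_gt 0 x with hx | hx
    · rw [abs_of_nonneg hx, max_eq_left hx]; ring
    · rw [abs_of_neg hx, max_eq_right hx.le]; ring
  simp_rw [this]
  rw [Finset.sum_sub_distrib, ← Finset.mul_sum, hsum, sub_zero, Tval]

lemma supAlpha_bounds (hρ : ρ.PosSemidef) (hρtr : ρ.trace = 1)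
    (hσ : σ.PosSemidef) (hσtr : σ.trace = 1) {α : ℝ} (hα : 1 < α)
    (h : (ρ - σ).IsHermitian) :
    1 + (1 - α⁻¹) * Tval ρ σ h ≤ supAlpha α ρ σ ∧
      supAlpha α ρ σ ≤ 1 + (α - 1) * Tval ρ σ h := by
  set A := ρ - σ with hAdef
  set T := Tval ρ σ h with hTdef
  have hT0 : 0 ≤ T := Tval_nonneg h
  set c : ℝ := α⁻¹ with hcdef
  have hα0 : 0 < α := lt_trans one_pos hα
  have hc0 : 0 < c := inv_pos.mpr hα0
  have hc1 : c < 1 := inv_lt_one_of_one_lt₀ hα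
  set δ : ℝ := 1 - c with hδdef
  have hδ0 : 0 < δ := by simp [hδdef]; linarith
  have hδc : δ / c = α - 1 := by
    simp only [hδdef, hcdef]
    field_simp
  -- positive/negative parts
  set Ap := mf h (fun x => max x 0) with hApdef
  set Am := mf h (fun x => max (-x) 0) with hAmdef
  have hApPsd : Ap.PosSemidef := mf_posSemidef h fun x => le_max_right _ _
  have hAmPsd : Am.PosSemidef := mf_posSemidef h fun x => le_max_right _ _
  have hApAm : Ap - Am = A := by
    rw [hApdef, hAmdef, mf_sub]
    have hfg : (fun x : ℝ => max x 0 - max (-x) 0) = id := by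
      funext x
      exact max_zero_sub_max_neg_zero_eq_self x
    rw [hfg, mf_id]
  have hApTr : Ap.trace.re = T := by
    rw [hApdef, mf_trace, Complex.ofReal_re, hTdef, Tval]
  -- the projection onto positive eigenspaces
  set F := mf h (fun x => if 0 < x then 1 else 0) with hFdef
  have hFPsd : F.PosSemidef := mf_posSemidef h fun x => by positivity
  have hFle : ((1 : Matrix (Fin n) (Fin n) ℂ) - F).PosSemidef := by
    rw [← mf_one h, hFdef, mf_sub]
    exact mf_posSemidef h fun x => by by_cases hx : 0 < x <;> simp [hx]
  have hFA : (F * A).trace.re = T := by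
    nth_rewrite 1 [← mf_id h]
    rw [hFdef, mf_mul, mf_trace, Complex.ofReal_re, hTdef, Tval]
    refine Finset.sum_congr rfl fun i _ => ?_
    rcases lt_or_ge 0 (h.eigenvalues i) with hx | hx
    · simp [hx, max_eq_left hx.le]
    · simp [not_lt.mpr hx, max_eq_right hx]
  -- trace of A is zero
  have hAtr : A.trace = 0 := by rw [hAdef, Matrix.trace_sub, hρtr, hσtr, sub_self]
  set S := { x : ℝ | ∃ E : Matrix (Fin n) (Fin n) ℂ,
    (E - ((α⁻¹ : ℝ) : ℂ) • (1 : Matrix (Fin n) (Fin n) ℂ)).PosSemidef ∧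
    ((1 : Matrix (Fin n) (Fin n) ℂ) - E).PosSemidef ∧
    x = ((E * ρ).trace.re) / ((E * σ).trace.re) } with hSdef
  have hsup : supAlpha α ρ σ = sSup S := rfl
  -- generic facts about feasible E
  have hden : ∀ E : Matrix (Fin n) (Fin n) ℂ,
      (E * σ).trace.re = ((E - ((α⁻¹:ℝ):ℂ) • (1:Matrix (Fin n) (Fin n) ℂ)) * σ).trace.re + c := by
    intro E
    have e1 : E * σ = (E - ((α⁻¹:ℝ):ℂ) • (1:Matrix (Fin n) (Fin n) ℂ)) * σ + ((α⁻¹:ℝ):ℂ) • σ := by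
      rw [Matrix.sub_mul, Matrix.smul_mul, one_mul, sub_add_cancel]
    rw [e1, Matrix.trace_add, Matrix.trace_smul, Complex.add_re, hσtr]
    simp [smul_eq_mul, hcdef]
  have hEA : ∀ E : Matrix (Fin n) (Fin n) ℂ,
      (E * A).trace.re = ((E - ((α⁻¹:ℝ):ℂ) • (1:Matrix (Fin n) (Fin n) ℂ)) * A).trace.re := by
    intro E
    have e1 : E * A = (E - ((α⁻¹:ℝ):ℂ) • (1:Matrix (Fin n) (Fin n) ℂ)) * A + ((α⁻¹:ℝ):ℂ) • A := by
      rw [Matrix.sub_mul, Matrix.smul_mul, one_mul, sub_add_cancel]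
    rw [e1, Matrix.trace_add, Matrix.trace_smul, hAtr, smul_zero, add_zero]
  have hnum : ∀ E : Matrix (Fin n) (Fin n) ℂ,
      (E * ρ).trace.re = (E * σ).trace.re + (E * A).trace.re := by
    intro E
    have e1 : E * ρ = E * σ + E * A := by
      rw [hAdef, Matrix.mul_sub, add_sub_cancel]
    rw [e1, Matrix.trace_add, Complex.add_re]
  -- bound on the A-part for feasible E
  have hdbound : ∀ E : Matrix (Fin n) (Fin n) ℂ,
      (E - ((α⁻¹:ℝ):ℂ) • (1:Matrix (Fin n) (Fin n) ℂ)).PosSemidef →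
      ((1:Matrix (Fin n) (Fin n) ℂ) - E).PosSemidef →
      ((E - ((α⁻¹:ℝ):ℂ) • (1:Matrix (Fin n) (Fin n) ℂ)) * A).trace.re ≤ δ * T := by
    intro E hG hIE
    set G := E - ((α⁻¹:ℝ):ℂ) • (1:Matrix (Fin n) (Fin n) ℂ) with hGdef
    have hd1 : (G * A).trace.re = (G * Ap).trace.re - (G * Am).trace.re := by
      rw [show G * A = G * Ap - G * Am by rw [← Matrix.mul_sub, hApAm],
        Matrix.trace_sub, Complex.sub_re]
    have hd2 : 0 ≤ (G * Am).trace.re := trace_mul_re_nonneg hG hAmPsd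
    have e3 : (1:Matrix (Fin n) (Fin n) ℂ) - E = ((δ:ℝ):ℂ) • (1:Matrix (Fin n) (Fin n) ℂ) - G := by
      have hdc : ((δ:ℝ):ℂ) = 1 - ((α⁻¹:ℝ):ℂ) := by
        rw [hδdef, hcdef]; push_cast; ring
      rw [hdc, hGdef, sub_smul, one_smul]
      abel
    have h0 := trace_mul_re_nonneg hIE hApPsd
    rw [e3, Matrix.sub_mul, Matrix.smul_mul, one_mul, Matrix.trace_sub, Matrix.trace_smul,
      Complex.sub_re] at h0
    have h5 : (((δ:ℝ):ℂ) • Ap.trace).re = δ * T := by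
      rw [smul_eq_mul, Complex.re_ofReal_mul, hApTr]
    rw [h5] at h0
    linarith
  -- upper bound for every element of S
  have hub : ∀ x ∈ S, x ≤ 1 + (α - 1) * T := by
    intro x hx
    obtain ⟨E, hG, hIE, hxeq⟩ := hx
    have hden_ge : c ≤ (E * σ).trace.re := by
      rw [hden E]
      have := trace_mul_re_nonneg hG hσ
      linarith
    have hden_pos : 0 < (E * σ).trace.re := lt_of_lt_of_le hc0 hden_ge
    have hd := hdbound E hG hIE
    rw [← hEA E] at hd
    rcases le_or_gt ((E * A).trace.re) 0 with hd0 | hd0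
    · have : x ≤ 1 := by
        rw [hxeq, div_le_one hden_pos, hnum E]
        linarith
      nlinarith
    · have hx2 : x = 1 + (E * A).trace.re / (E * σ).trace.re := by
        rw [hxeq, hnum E, add_div, div_self (ne_of_gt hden_pos)]
      have hx3 : (E * A).trace.re / (E * σ).trace.re ≤ (δ * T) / c :=
        div_le_div₀ (mul_nonneg hδ0.le hT0) hd hc0 hden_ge
      have hx4 : (δ * T) / c = (α - 1) * T := by
        rw [← hδc]; ring
      rw [hx2]
      linarith [hx3.trans_eq hx4]
  have hbdd : BddAbove S := ⟨1 + (α - 1) * T, fun x hx => hub x hx⟩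
  -- the witness
  set E₀ := ((α⁻¹:ℝ):ℂ) • (1:Matrix (Fin n) (Fin n) ℂ) + ((δ:ℝ):ℂ) • F with hE₀def
  have hE₀eq : E₀ = mf h (fun x => c + δ * (if 0 < x then 1 else 0)) := by
    rw [hE₀def, hFdef, mf_smul, ← mf_one h]
    have : ((α⁻¹:ℝ):ℂ) • mf h (fun _ => 1) = mf h (fun _ => c * 1) := mf_smul h _ _
    rw [this, mf_add]
    congr 1
    funext x
    simp [hcdef]
  have hG₀ : (E₀ - ((α⁻¹:ℝ):ℂ) • (1:Matrix (Fin n) (Fin n) ℂ)).PosSemidef := by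
    rw [hE₀def, add_sub_cancel_left, hFdef, mf_smul]
    exact mf_posSemidef h fun x => by positivity
  have hIE₀ : ((1:Matrix (Fin n) (Fin n) ℂ) - E₀).PosSemidef := by
    rw [hE₀eq, ← mf_one h, mf_sub]
    refine mf_posSemidef h fun x => ?_
    by_cases hx : 0 < x <;> simp [hx, hδdef] <;> linarith
  set t := (F * ρ).trace.re with htdef
  set s := (F * σ).trace.re with hsdef
  have hnum₀ : (E₀ * ρ).trace.re = c + δ * t := by
    rw [hE₀def, Matrix.add_mul, Matrix.smul_mul, Matrix.smul_mul, one_mul,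
      Matrix.trace_add, Matrix.trace_smul, Matrix.trace_smul, Complex.add_re,
      hρtr, smul_eq_mul, smul_eq_mul, Complex.re_ofReal_mul]
    simp [hcdef, htdef]
  have hden₀ : (E₀ * σ).trace.re = c + δ * s := by
    rw [hE₀def, Matrix.add_mul, Matrix.smul_mul, Matrix.smul_mul, one_mul,
      Matrix.trace_add, Matrix.trace_smul, Matrix.trace_smul, Complex.add_re,
      hσtr, smul_eq_mul, smul_eq_mul, Complex.re_ofReal_mul]
    simp [hcdef, hsdef]
  have hts : t - s = T := by
    have e1 : F * A = F * ρ - F * σ := by rw [hAdef, Matrix.mul_sub]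
    have := hFA
    rw [e1, Matrix.trace_sub, Complex.sub_re] at this
    exact this
  have hs0 : 0 ≤ s := trace_mul_re_nonneg hFPsd hσ
  have hs1 : s ≤ 1 := by
    have h0 := trace_mul_re_nonneg hFle hσ
    have e1 : ((1:Matrix (Fin n) (Fin n) ℂ) - F) * σ = σ - F * σ := by
      rw [Matrix.sub_mul, one_mul]
    rw [e1, Matrix.trace_sub, Complex.sub_re, hσtr] at h0
    simp only [Complex.one_re] at h0
    linarith
  have hden₀pos : 0 < c + δ * s := by positivity
  have hmem : (c + δ * t) / (c + δ * s) ∈ S := by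
    refine ⟨E₀, hG₀, hIE₀, ?_⟩
    rw [hnum₀, hden₀]
  have hlow : 1 + δ * T ≤ (c + δ * t) / (c + δ * s) := by
    rw [le_div_iff₀ hden₀pos]
    have ht' : t = s + T := by linarith
    have hc' : c + δ = 1 := by rw [hδdef]; ring
    nlinarith [mul_nonneg hδ0.le hT0, mul_nonneg (mul_nonneg hδ0.le hδ0.le) (mul_nonneg hT0 (by linarith : (0:ℝ) ≤ 1 - s))]
  constructor
  · calc 1 + (1 - α⁻¹) * T = 1 + δ * T := by rw [hδdef, hcdef]
      _ ≤ (c + δ * t) / (c + δ * s) := hlow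
      _ ≤ sSup S := le_csSup hbdd hmem
  · rw [hsup]
    exact csSup_le ⟨_, hmem⟩ hub


end HilbertAux

/-- For density matrices `ρ, σ` on `ℂ^n`,
`lim_{α→1⁺} H_α(ρ‖σ) = (1/(2 ln 2))·‖ρ - σ‖₁`. -/
theorem hilbert_alpha_divergence_tendsto_traceDist
    {n : ℕ} (ρ σ : Matrix (Fin n) (Fin n) ℂ)
    (hρ : ρ.PosSemidef) (hρtr : ρ.trace = 1)
    (hσ : σ.PosSemidef) (hσtr : σ.trace = 1) :
    Filter.Tendsto (fun α : ℝ => HAlpha α ρ σ) (nhdsWithin 1 (Set.Ioi 1))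
      (nhds ((1 / (2 * Real.log 2)) * traceNorm (ρ - σ))) := by
  have h : (ρ - σ).IsHermitian := hρ.1.sub hσ.1
  set T := HilbertAux.Tval ρ σ h with hTdef
  have hT0 : 0 ≤ T := HilbertAux.Tval_nonneg h
  have hlog2 : 0 < Real.log 2 := Real.log_pos one_lt_two
  have htN : traceNorm (ρ - σ) = 2 * T := HilbertAux.traceNorm_eq_two_Tval h hρtr hσtr
  have htarget : (1 / (2 * Real.log 2)) * traceNorm (ρ - σ) = (Real.log 2)⁻¹ * T := by
    rw [htN]
    field_simp
  rw [htarget]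
  have key := HilbertAux.tendsto_log_one_add_div T
  -- the lower bounding function
  have hu : Filter.Tendsto (fun α : ℝ => (α - 1) / α) (nhdsWithin 1 (Set.Ioi 1))
      (nhdsWithin 0 (Set.Ioi 0)) := by
    rw [tendsto_nhdsWithin_iff]
    constructor
    · have hc : Filter.Tendsto (fun α : ℝ => (α - 1) / α) (nhds 1) (nhds ((1 - 1) / 1)) :=
        ((continuousAt_id.sub continuousAt_const).div continuousAt_id (by norm_num)).tendsto
      simpa using hc.mono_left nhdsWithin_le_nhds
    · filter_upwards [self_mem_nhdsWithin] with α hα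
      have hα1 : (1:ℝ) < α := hα
      have h1 : (0:ℝ) < α - 1 := by linarith
      have h2 : (0:ℝ) < α := by linarith
      exact Set.mem_Ioi.mpr (div_pos h1 h2)
  have hlo : Filter.Tendsto (fun α : ℝ => (α / (α - 1)) * Real.logb 2 (1 + (1 - α⁻¹) * T))
      (nhdsWithin 1 (Set.Ioi 1)) (nhds ((Real.log 2)⁻¹ * T)) := by
    have h1 := (key.comp hu).const_mul (Real.log 2)⁻¹
    refine h1.congr' ?_
    filter_upwards [self_mem_nhdsWithin] with α hα
    have hα1 : (1:ℝ) < α := hα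
    have hα0 : (0:ℝ) < α := by linarith
    have hd0 : (0:ℝ) < α - 1 := by linarith
    have hinv : 1 - α⁻¹ = (α - 1) / α := by field_simp
    rw [Real.logb, hinv, Function.comp]
    rw [mul_comm T ((α - 1) / α)]
    field_simp
  have hv : Filter.Tendsto (fun α : ℝ => α - 1) (nhdsWithin 1 (Set.Ioi 1))
      (nhdsWithin 0 (Set.Ioi 0)) := by
    rw [tendsto_nhdsWithin_iff]
    constructor
    · have hc : Filter.Tendsto (fun α : ℝ => α - 1) (nhds 1) (nhds (1 - 1)) :=
        (continuousAt_id.sub continuousAt_const).tendsto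
      simpa using hc.mono_left nhdsWithin_le_nhds
    · filter_upwards [self_mem_nhdsWithin] with α hα
      have hα1 : (1:ℝ) < α := hα
      simpa using hα1
  have hid : Filter.Tendsto (fun α : ℝ => α) (nhdsWithin 1 (Set.Ioi 1)) (nhds 1) :=
    Filter.tendsto_id.mono_left nhdsWithin_le_nhds
  have hhi : Filter.Tendsto (fun α : ℝ => (α / (α - 1)) * Real.logb 2 (1 + (α - 1) * T))
      (nhdsWithin 1 (Set.Ioi 1)) (nhds ((Real.log 2)⁻¹ * T)) := by
    have h1 := ((hid.mul (key.comp hv)).const_mul (Real.log 2)⁻¹)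
    have h2 : (Real.log 2)⁻¹ * (1 * T) = (Real.log 2)⁻¹ * T := by ring
    rw [h2] at h1
    refine h1.congr' ?_
    filter_upwards [self_mem_nhdsWithin] with α hα
    have hα1 : (1:ℝ) < α := hα
    have hd0 : (0:ℝ) < α - 1 := by linarith
    rw [Real.logb, Function.comp]
    rw [mul_comm T (α - 1)]
    simp only [div_eq_mul_inv]
    ring
  refine tendsto_of_tendsto_of_tendsto_of_le_of_le' hlo hhi ?_ ?_
  · filter_upwards [self_mem_nhdsWithin] with α hα
    have hα1 : (1:ℝ) < α := hα
    obtain ⟨hb1, hb2⟩ := HilbertAux.supAlpha_bounds hρ hρtr hσ hσtr hα1 h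
    have hcoef : 0 ≤ α / (α - 1) := div_nonneg (by linarith) (by linarith)
    have hpos : (0:ℝ) < 1 + (1 - α⁻¹) * T := by
      have : 0 ≤ 1 - α⁻¹ := by
        have : α⁻¹ < 1 := inv_lt_one_of_one_lt₀ hα1
        linarith
      nlinarith
    rw [HAlpha]
    exact mul_le_mul_of_nonneg_left
      (Real.logb_le_logb_of_le one_lt_two hpos hb1) hcoef
  · filter_upwards [self_mem_nhdsWithin] with α hα
    have hα1 : (1:ℝ) < α := hα
    obtain ⟨hb1, hb2⟩ := HilbertAux.supAlpha_bounds hρ hρtr hσ hσtr hα1 h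
    have hcoef : 0 ≤ α / (α - 1) := div_nonneg (by linarith) (by linarith)
    have hpos : (0:ℝ) < supAlpha α ρ σ := by
      have h1 : 0 ≤ 1 - α⁻¹ := by
        have : α⁻¹ < 1 := inv_lt_one_of_one_lt₀ hα1
        linarith
      nlinarith
    rw [HAlpha]
    exact mul_le_mul_of_nonneg_left
      (Real.logb_le_logb_of_le one_lt_two hpos hb2) hcoef
end

section
/- Let γ = Z⁻¹·Σ_{x=1}^{d} e^{−βE_x}|x⟩⟨x| be a Gibbs state on ℂ^d, let ρ and σ be density matrices on ℂ^d with supp(ρ) = supp(σ) = span{|1⟩,|2⟩}, and let γ⁽²⁾ := p|1⟩⟨1| + (1−p)|2⟩⟨2| with p = e^{−βE₁}/(e^{−βE₁} + e^{−βE₂}) be the renormalized restriction of γ to this subspace. Then there exists a completely positive trace-preserving map Φ on d×d matrices with Φ(ρ) = σ and Φ(γ) = γ if and only if there exists a completely positive trace-preserving map ℰ on 2×2 matrices with ℰ(ρ) = σ and ℰ(γ⁽²⁾) = γ⁽²⁾ (where ρ, σ are identified with their 2×2 restrictions to span{|1⟩,|2⟩}). -/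
open scoped ComplexOrder

/-- A linear map `Φ` between matrix algebras is completely positive if its tensor
extension `id_k ⊗ Φ` is positive for every `k`. -/
def IsCompletelyPositive {d m : ℕ}
    (Φ : Matrix (Fin d) (Fin d) ℂ →ₗ[ℂ] Matrix (Fin m) (Fin m) ℂ) : Prop :=
  ∀ (k : ℕ) (M : Matrix (Fin k × Fin d) (Fin k × Fin d) ℂ), M.PosSemidef →
    (Matrix.of fun (r s : Fin k × Fin m) =>
      Φ (Matrix.of fun a b => M (r.1, a) (s.1, b)) r.2 s.2).PosSemidef

/-- The `2×2` restriction of a `d×d` matrix to the subspace spanned by the first two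
basis vectors `|1⟩, |2⟩`. -/
def restrict2 {d : ℕ} (hd : 2 ≤ d) (A : Matrix (Fin d) (Fin d) ℂ) :
    Matrix (Fin 2) (Fin 2) ℂ :=
  Matrix.of fun i j => A (Fin.castLE hd i) (Fin.castLE hd j)

namespace GibbsAux

open Matrix

variable {d m e : ℕ}

/-- Conjugation map `A ↦ V A Vᴴ`. -/
noncomputable def conjMap (V : Matrix (Fin m) (Fin d) ℂ) :
    Matrix (Fin d) (Fin d) ℂ →ₗ[ℂ] Matrix (Fin m) (Fin m) ℂ where
  toFun A := V * A * Vᴴ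
  map_add' A B := by
    show V * (A + B) * Vᴴ = V * A * Vᴴ + V * B * Vᴴ
    rw [Matrix.mul_add, Matrix.add_mul]
  map_smul' c A := by
    show V * (c • A) * Vᴴ = c • (V * A * Vᴴ)
    rw [Matrix.mul_smul, Matrix.smul_mul]

lemma conjMap_apply (V : Matrix (Fin m) (Fin d) ℂ) (A : Matrix (Fin d) (Fin d) ℂ) :
    conjMap V A = V * A * Vᴴ := rfl

lemma isCP_conjMap (V : Matrix (Fin m) (Fin d) ℂ) : IsCompletelyPositive (conjMap V) := by
  intro k M hM
  have hW : (Matrix.of fun (r s : Fin k × Fin m) =>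
      conjMap V (Matrix.of fun a b => M (r.1, a) (s.1, b)) r.2 s.2) =
      (Matrix.of fun (r : Fin k × Fin m) (x : Fin k × Fin d) =>
        if r.1 = x.1 then V r.2 x.2 else 0) * M *
      (Matrix.of fun (r : Fin k × Fin m) (x : Fin k × Fin d) =>
        if r.1 = x.1 then V r.2 x.2 else 0)ᴴ := by
    ext r s
    simp only [Matrix.of_apply, conjMap_apply, Matrix.mul_apply, Matrix.conjTranspose_apply,
      Fintype.sum_prod_type, apply_ite (star : ℂ → ℂ), star_zero, ite_mul, mul_ite, zero_mul, mul_zero,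
      Finset.sum_ite_irrel, Finset.sum_const_zero, Finset.sum_ite_eq, Finset.mem_univ, if_true]
  rw [hW]
  exact hM.mul_mul_conjTranspose_same _

lemma isCP_add {Φ Ψ : Matrix (Fin d) (Fin d) ℂ →ₗ[ℂ] Matrix (Fin m) (Fin m) ℂ}
    (hΦ : IsCompletelyPositive Φ) (hΨ : IsCompletelyPositive Ψ) :
    IsCompletelyPositive (Φ + Ψ) := by
  intro k M hM
  have h : (Matrix.of fun (r s : Fin k × Fin m) =>
        (Φ + Ψ) (Matrix.of fun a b => M (r.1, a) (s.1, b)) r.2 s.2)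
      = (Matrix.of fun (r s : Fin k × Fin m) =>
          Φ (Matrix.of fun a b => M (r.1, a) (s.1, b)) r.2 s.2)
        + (Matrix.of fun (r s : Fin k × Fin m) =>
          Ψ (Matrix.of fun a b => M (r.1, a) (s.1, b)) r.2 s.2) := by
    ext r s; simp [Matrix.add_apply]
  rw [h]; exact (hΦ k M hM).add (hΨ k M hM)

lemma isCP_zero : IsCompletelyPositive (0 : Matrix (Fin d) (Fin d) ℂ →ₗ[ℂ] Matrix (Fin m) (Fin m) ℂ) := by
  intro k M hM
  have h : (Matrix.of fun (r s : Fin k × Fin m) =>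
      (0 : Matrix (Fin d) (Fin d) ℂ →ₗ[ℂ] Matrix (Fin m) (Fin m) ℂ)
        (Matrix.of fun a b => M (r.1, a) (s.1, b)) r.2 s.2) = 0 := by
    ext r s; simp
  rw [h]; exact Matrix.PosSemidef.zero

lemma isCP_sum {ι : Type*} (s : Finset ι)
    (f : ι → (Matrix (Fin d) (Fin d) ℂ →ₗ[ℂ] Matrix (Fin m) (Fin m) ℂ))
    (hf : ∀ i ∈ s, IsCompletelyPositive (f i)) :
    IsCompletelyPositive (∑ i ∈ s, f i) := by
  classical
  induction s using Finset.induction_on with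
  | empty => simpa using isCP_zero
  | @insert a s ha ih =>
    rw [Finset.sum_insert ha]
    exact isCP_add (hf a (Finset.mem_insert_self _ _))
      (ih fun i hi => hf i (Finset.mem_insert_of_mem hi))

lemma isCP_comp
    {Φ : Matrix (Fin d) (Fin d) ℂ →ₗ[ℂ] Matrix (Fin m) (Fin m) ℂ}
    {Ψ : Matrix (Fin m) (Fin m) ℂ →ₗ[ℂ] Matrix (Fin e) (Fin e) ℂ}
    (hΨ : IsCompletelyPositive Ψ) (hΦ : IsCompletelyPositive Φ) :
    IsCompletelyPositive (Ψ ∘ₗ Φ) := fun k M hM => hΨ k _ (hΦ k M hM)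

lemma isCP_posSemidef
    {Φ : Matrix (Fin d) (Fin d) ℂ →ₗ[ℂ] Matrix (Fin m) (Fin m) ℂ}
    (hΦ : IsCompletelyPositive Φ) {A : Matrix (Fin d) (Fin d) ℂ} (hA : A.PosSemidef) :
    (Φ A).PosSemidef := by
  have h1 := hΦ 1 (A.submatrix Prod.snd Prod.snd) (hA.submatrix _)
  have h2 := h1.submatrix (fun i : Fin m => ((0 : Fin 1), i))
  have h3 : (Matrix.of fun (r s : Fin 1 × Fin m) =>
      Φ (Matrix.of fun a b => (A.submatrix Prod.snd Prod.snd) (r.1, a) (s.1, b)) r.2 s.2).submatrix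
      (fun i : Fin m => ((0 : Fin 1), i)) (fun i : Fin m => ((0 : Fin 1), i)) = Φ A := rfl
  rwa [h3] at h2



lemma psd_diag_nonneg {n : ℕ} {M : Matrix (Fin n) (Fin n) ℂ} (hM : M.PosSemidef)
    (i : Fin n) : 0 ≤ M i i := by
  have h := hM.dotProduct_mulVec_nonneg (Pi.single i 1)
  simpa [Matrix.mulVec_single, dotProduct, Pi.single_apply, apply_ite (star : ℂ → ℂ)]
    using h

lemma psd_col_eq_zero {n : ℕ} {M : Matrix (Fin n) (Fin n) ℂ} (hM : M.PosSemidef) {i : Fin n}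
    (h : M i i = 0) (j : Fin n) : M j i = 0 := by
  have h0 : star (Pi.single i 1 : Fin n → ℂ) ⬝ᵥ M *ᵥ (Pi.single i 1) = 0 := by
    simpa [Matrix.mulVec_single, dotProduct, Pi.single_apply, apply_ite (star : ℂ → ℂ)]
      using h
  have h1 := (hM.dotProduct_mulVec_zero_iff _).mp h0
  have h2 := congrFun h1 j
  simpa [Matrix.mulVec_single] using h2

lemma posSemidef_coe_smul {n : ℕ} {t : ℝ} (ht : 0 ≤ t) {M : Matrix (Fin n) (Fin n) ℂ}
    (hM : M.PosSemidef) : (((t : ℂ)) • M).PosSemidef := by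
  refine Matrix.PosSemidef.of_dotProduct_mulVec_nonneg ?_ ?_
  · have : ((t : ℂ) • M)ᴴ = star (t : ℂ) • Mᴴ := Matrix.conjTranspose_smul _ _
    rw [Matrix.IsHermitian, this, hM.1, Complex.star_def, Complex.conj_ofReal]
  · intro x
    rw [Matrix.smul_mulVec, dotProduct_smul, smul_eq_mul]
    exact mul_nonneg (by exact_mod_cast ht) (hM.dotProduct_mulVec_nonneg x)

lemma exists_sub_smul_one_posSemidef {n : ℕ} [NeZero n] {A : Matrix (Fin n) (Fin n) ℂ}
    (hA : A.PosDef) : ∃ ε : ℝ, 0 < ε ∧ (A - (ε : ℂ) • 1).PosSemidef := by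
  have hne : (Finset.univ : Finset (Fin n)).Nonempty := Finset.univ_nonempty
  set ev := hA.1.eigenvalues with hev
  set U : Matrix (Fin n) (Fin n) ℂ := (hA.1.eigenvectorUnitary : Matrix (Fin n) (Fin n) ℂ)
    with hUdef
  refine ⟨Finset.univ.inf' hne ev, ?_, ?_⟩
  · obtain ⟨i, -, hi⟩ := Finset.exists_mem_eq_inf' hne ev
    rw [hi]; exact hA.eigenvalues_pos i
  · set ε := Finset.univ.inf' hne ev with hεdef
    have hUU : U * Uᴴ = 1 := by
      rw [← Matrix.star_eq_conjTranspose]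
      exact Matrix.mem_unitaryGroup_iff.mp (hA.1.eigenvectorUnitary).2
    have key : A - (ε : ℂ) • 1 =
        U * Matrix.diagonal (fun i => ((ev i - ε : ℝ) : ℂ)) * Uᴴ := by
      have h1 : (ε : ℂ) • (1 : Matrix (Fin n) (Fin n) ℂ)
          = U * ((ε : ℂ) • 1) * Uᴴ := by
        rw [Matrix.mul_smul, Matrix.mul_one, Matrix.smul_mul, hUU]
      conv_lhs => rw [hA.1.spectral_theorem, h1, Unitary.conjStarAlgAut_apply]
      rw [← Matrix.star_eq_conjTranspose U, ← Matrix.sub_mul, ← Matrix.mul_sub]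
      congr 2
      ext i j
      by_cases h : i = j <;>
        simp [Matrix.diagonal_apply, Matrix.one_apply, h, Complex.ofReal_sub,
          RCLike.ofReal_alg, sub_smul, hev]
    rw [key]
    refine Matrix.PosSemidef.mul_mul_conjTranspose_same ?_ _
    refine Matrix.posSemidef_diagonal_iff.mpr fun i => ?_
    rw [Complex.zero_le_real]
    exact sub_nonneg.mpr (Finset.inf'_le _ (Finset.mem_univ i))

lemma exists_smul_one_sub_posSemidef {n : ℕ} {B : Matrix (Fin n) (Fin n) ℂ}
    (hB : B.PosSemidef) : ∃ τ : ℝ, 0 < τ ∧ ((τ : ℂ) • 1 - B).PosSemidef := by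
  set ev := hB.1.eigenvalues with hev
  set U : Matrix (Fin n) (Fin n) ℂ := (hB.1.eigenvectorUnitary : Matrix (Fin n) (Fin n) ℂ)
    with hUdef
  have hnn : ∀ i, 0 ≤ ev i := fun i => hB.eigenvalues_nonneg i
  refine ⟨(∑ i, ev i) + 1,
    add_pos_of_nonneg_of_pos (Finset.sum_nonneg fun i _ => hnn i) one_pos, ?_⟩
  set τ : ℝ := (∑ i, ev i) + 1 with hτdef
  have hUU : U * Uᴴ = 1 := by
    rw [← Matrix.star_eq_conjTranspose]
    exact Matrix.mem_unitaryGroup_iff.mp (hB.1.eigenvectorUnitary).2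
  have key : (τ : ℂ) • 1 - B =
      U * Matrix.diagonal (fun i => ((τ - ev i : ℝ) : ℂ)) * Uᴴ := by
    have h1 : (τ : ℂ) • (1 : Matrix (Fin n) (Fin n) ℂ)
        = U * ((τ : ℂ) • 1) * Uᴴ := by
      rw [Matrix.mul_smul, Matrix.mul_one, Matrix.smul_mul, hUU]
    conv_lhs => rw [hB.1.spectral_theorem, h1, Unitary.conjStarAlgAut_apply]
    rw [← Matrix.star_eq_conjTranspose U, ← Matrix.sub_mul, ← Matrix.mul_sub]
    congr 2
    ext i j
    by_cases h : i = j <;>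
      simp [Matrix.diagonal_apply, Matrix.one_apply, h, Complex.ofReal_sub,
        RCLike.ofReal_alg, sub_smul, hev]
  rw [key]
  refine Matrix.PosSemidef.mul_mul_conjTranspose_same ?_ _
  refine Matrix.posSemidef_diagonal_iff.mpr fun i => ?_
  rw [Complex.zero_le_real]
  have : ev i ≤ ∑ j, ev j := Finset.single_le_sum (fun j _ => hnn j) (Finset.mem_univ i)
  simp only [hτdef]; linarith

lemma exists_coe_smul_sub_posSemidef {n : ℕ} [NeZero n] {A B : Matrix (Fin n) (Fin n) ℂ}
    (hA : A.PosDef) (hB : B.PosSemidef) :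
    ∃ t : ℝ, 0 < t ∧ ((t : ℂ) • A - B).PosSemidef := by
  obtain ⟨ε, hε, h1⟩ := exists_sub_smul_one_posSemidef hA
  obtain ⟨τ, hτ, h2⟩ := exists_smul_one_sub_posSemidef hB
  refine ⟨τ / ε, div_pos hτ hε, ?_⟩
  have h3 : ((τ / ε : ℝ) : ℂ) • ((ε : ℂ) • (1 : Matrix (Fin n) (Fin n) ℂ)) = (τ : ℂ) • 1 := by
    rw [smul_smul]
    norm_cast
    rw [div_mul_cancel₀ _ (ne_of_gt hε)]
  have key : ((τ / ε : ℝ) : ℂ) • A - B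
      = ((τ / ε : ℝ) : ℂ) • (A - (ε : ℂ) • 1) + ((τ : ℂ) • 1 - B) := by
    rw [smul_sub, h3]; abel
  rw [key]
  exact (posSemidef_coe_smul (le_of_lt (div_pos hτ hε)) h1).add h2




def Vmat (hd : 2 ≤ d) : Matrix (Fin 2) (Fin d) ℂ :=
  Matrix.of fun i j => if j = Fin.castLE hd i then 1 else 0

lemma Vmat_mul_conjTranspose (hd : 2 ≤ d) : Vmat hd * (Vmat hd)ᴴ = 1 := by
  ext i j
  simp only [Vmat, Matrix.mul_apply, Matrix.conjTranspose_apply, Matrix.of_apply,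
    apply_ite (star : ℂ → ℂ), star_one, star_zero, ite_mul, mul_ite, one_mul, mul_one,
    zero_mul, mul_zero, Finset.sum_ite_eq', Finset.mem_univ, if_true, Matrix.one_apply,
    Fin.castLE_inj]
  exact if_congr eq_comm rfl rfl

lemma restrict2_eq (hd : 2 ≤ d) (A : Matrix (Fin d) (Fin d) ℂ) :
    restrict2 hd A = Vmat hd * A * (Vmat hd)ᴴ := by
  ext i j
  simp only [restrict2, Vmat, Matrix.mul_apply, Matrix.conjTranspose_apply, Matrix.of_apply,
    apply_ite (star : ℂ → ℂ), star_one, star_zero, ite_mul, mul_ite, one_mul, mul_one,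
    zero_mul, mul_zero, Finset.sum_ite_eq', Finset.mem_univ, if_true]

lemma embed_apply_low (hd : 2 ≤ d) (X : Matrix (Fin 2) (Fin 2) ℂ) (a b : Fin 2) :
    ((Vmat hd)ᴴ * X * Vmat hd) (Fin.castLE hd a) (Fin.castLE hd b) = X a b := by
  simp only [Vmat, Matrix.mul_apply, Matrix.conjTranspose_apply, Matrix.of_apply,
    apply_ite (star : ℂ → ℂ), star_one, star_zero, ite_mul, mul_ite, one_mul, mul_one,
    zero_mul, mul_zero, Fin.castLE_inj, Finset.sum_ite_eq, Finset.sum_ite_eq',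
    Finset.mem_univ, if_true]

lemma embed_apply_high (hd : 2 ≤ d) (X : Matrix (Fin 2) (Fin 2) ℂ) {i j : Fin d}
    (h : ¬ ((i : ℕ) < 2 ∧ (j : ℕ) < 2)) : ((Vmat hd)ᴴ * X * Vmat hd) i j = 0 := by
  simp only [Vmat, Matrix.mul_apply, Matrix.conjTranspose_apply, Matrix.of_apply,
    apply_ite (star : ℂ → ℂ), star_one, star_zero, ite_mul, mul_ite, one_mul, mul_one,
    zero_mul, mul_zero]
  by_cases hi2 : (i : ℕ) < 2
  · have hj2 : ¬ (j : ℕ) < 2 := fun hj => h ⟨hi2, hj⟩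
    apply Finset.sum_eq_zero; intro y _
    have hy : ¬ (j = Fin.castLE hd y) := by
      intro hj; apply hj2; rw [hj]; simpa using y.isLt
    simp [hy]
  · apply Finset.sum_eq_zero; intro y _
    have hx : ∀ x : Fin 2, ¬ (i = Fin.castLE hd x) := by
      intro x hx'; apply hi2; rw [hx']; simpa using x.isLt
    have hz : (∑ x : Fin 2, if i = Fin.castLE hd x then X x y else 0) = 0 :=
      Finset.sum_eq_zero fun x _ => by simp [hx x]
    simp [hz]

lemma trace_embed (hd : 2 ≤ d) (X : Matrix (Fin 2) (Fin 2) ℂ) :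
    ((Vmat hd)ᴴ * X * Vmat hd).trace = X.trace := by
  rw [Matrix.trace_mul_cycle, Vmat_mul_conjTranspose, Matrix.one_mul]

lemma trace_split (hd : 2 ≤ d) (A : Matrix (Fin d) (Fin d) ℂ) :
    A.trace = (restrict2 hd A).trace + ∑ i : Fin d, (if (i : ℕ) < 2 then 0 else A i i) := by
  classical
  have himg : (Finset.univ.image (Fin.castLE hd) : Finset (Fin d))
      = Finset.univ.filter (fun i : Fin d => (i : ℕ) < 2) := by
    ext i
    simp only [Finset.mem_image, Finset.mem_univ, true_and, Finset.mem_filter]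
    constructor
    · rintro ⟨a, rfl⟩; simpa using a.isLt
    · intro hlt; exact ⟨⟨(i : ℕ), hlt⟩, rfl⟩
  have h1 : (restrict2 hd A).trace
      = ∑ i ∈ Finset.univ.filter (fun i : Fin d => (i : ℕ) < 2), A i i := by
    rw [← himg, Finset.sum_image (fun a _ b _ h => Fin.castLE_injective hd h)]
    simp [Matrix.trace, Matrix.diag, restrict2]
  have h2 : ∑ i : Fin d, (if (i : ℕ) < 2 then 0 else A i i)
      = ∑ i ∈ Finset.univ.filter (fun i : Fin d => ¬ (i : ℕ) < 2), A i i := by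
    rw [Finset.sum_filter]
    exact Finset.sum_congr rfl fun i _ => by by_cases h : (i : ℕ) < 2 <;> simp [h]
  rw [h1, h2, Matrix.trace]
  exact (Finset.sum_filter_add_sum_filter_not _ _ _).symm


lemma sum_eq_sum_fin2 {d : ℕ} (hd : 2 ≤ d) (f : Fin d → ℂ)
    (hf : ∀ j : Fin d, ¬ (j : ℕ) < 2 → f j = 0) :
    ∑ j, f j = ∑ b : Fin 2, f (Fin.castLE hd b) := by
  classical
  have himg : (Finset.univ.image (Fin.castLE hd) : Finset (Fin d))
      = Finset.univ.filter (fun i : Fin d => (i : ℕ) < 2) := by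
    ext i
    simp only [Finset.mem_image, Finset.mem_univ, true_and, Finset.mem_filter]
    constructor
    · rintro ⟨a, rfl⟩; simpa using a.isLt
    · intro hlt; exact ⟨⟨(i : ℕ), hlt⟩, rfl⟩
  rw [← Finset.sum_filter_add_sum_filter_not Finset.univ (fun j : Fin d => (j : ℕ) < 2) f]
  have h0 : ∑ j ∈ Finset.univ.filter (fun j : Fin d => ¬ (j : ℕ) < 2), f j = 0 :=
    Finset.sum_eq_zero fun j hj => hf j (Finset.mem_filter.mp hj).2
  rw [h0, add_zero, ← himg, Finset.sum_image (fun a _ b _ h => Fin.castLE_injective hd h)]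

end GibbsAux

set_option maxHeartbeats 2000000 in
open GibbsAux Matrix in
/-- Lemma 6 of the paper: with `γ` the Gibbs state on `ℂ^d`, `ρ, σ` density matrices
supported exactly on `span{|1⟩,|2⟩}`, and `γ⁽²⁾ = p|1⟩⟨1| + (1-p)|2⟩⟨2|` the
renormalized restriction of `γ` to that subspace, there exists a CPTP map `Φ` on
`d×d` matrices with `Φ(ρ) = σ` and `Φ(γ) = γ` if and only if there exists a CPTP map
`ℰ` on `2×2` matrices with `ℰ(ρ) = σ` and `ℰ(γ⁽²⁾) = γ⁽²⁾` (where `ρ, σ` are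
identified with their `2×2` restrictions). -/
theorem gibbs_preserving_reduction_to_qubit
    {d : ℕ} (hd : 2 ≤ d) (β : ℝ) (En : Fin d → ℝ)
    (hE : En ⟨0, by omega⟩ ≤ En ⟨1, by omega⟩)
    (γ ρ σ : Matrix (Fin d) (Fin d) ℂ)
    (hγ : γ = Matrix.diagonal fun x =>
      ((Real.exp (-β * En x) / ∑ y, Real.exp (-β * En y) : ℝ) : ℂ))
    (hρ : ρ.PosSemidef) (hρtr : ρ.trace = 1)
    (hσ : σ.PosSemidef) (hσtr : σ.trace = 1)
    (hsuppρ : LinearMap.range (Matrix.toLin' ρ) =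
      Submodule.span ℂ {Pi.single (⟨0, by omega⟩ : Fin d) (1 : ℂ),
        Pi.single (⟨1, by omega⟩ : Fin d) (1 : ℂ)})
    (hsuppσ : LinearMap.range (Matrix.toLin' σ) =
      Submodule.span ℂ {Pi.single (⟨0, by omega⟩ : Fin d) (1 : ℂ),
        Pi.single (⟨1, by omega⟩ : Fin d) (1 : ℂ)})
    (p : ℝ)
    (hp : p = Real.exp (-β * En ⟨0, by omega⟩) /
      (Real.exp (-β * En ⟨0, by omega⟩) + Real.exp (-β * En ⟨1, by omega⟩)))
    (γ2 : Matrix (Fin 2) (Fin 2) ℂ)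
    (hγ2 : γ2 = Matrix.diagonal ![(p : ℂ), ((1 - p : ℝ) : ℂ)]) :
    (∃ Φ : Matrix (Fin d) (Fin d) ℂ →ₗ[ℂ] Matrix (Fin d) (Fin d) ℂ,
        IsCompletelyPositive Φ ∧ (∀ A, (Φ A).trace = A.trace) ∧
        Φ ρ = σ ∧ Φ γ = γ) ↔
      (∃ ℰ : Matrix (Fin 2) (Fin 2) ℂ →ₗ[ℂ] Matrix (Fin 2) (Fin 2) ℂ,
        IsCompletelyPositive ℰ ∧ (∀ A, (ℰ A).trace = A.trace) ∧
        ℰ (restrict2 hd ρ) = restrict2 hd σ ∧ ℰ γ2 = γ2) := by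
  classical
  set Z : ℝ := ∑ y, Real.exp (-β * En y) with hZdef
  have hZpos : 0 < Z :=
    Finset.sum_pos (fun y _ => Real.exp_pos _) ⟨⟨0, by omega⟩, Finset.mem_univ _⟩
  have hZ0 : Z ≠ 0 := ne_of_gt hZpos
  have he0 : (0:ℝ) < Real.exp (-β * En ⟨0, by omega⟩) := Real.exp_pos _
  have he1 : (0:ℝ) < Real.exp (-β * En ⟨1, by omega⟩) := Real.exp_pos _
  have hp0 : 0 < p := by rw [hp]; positivity
  have hp1 : p < 1 := by
    rw [hp, div_lt_one (by positivity)]; linarith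
  set cR : ℝ := (Real.exp (-β * En ⟨0, by omega⟩) + Real.exp (-β * En ⟨1, by omega⟩)) / Z
    with hcRdef
  have hcR0 : 0 < cR := by rw [hcRdef]; positivity
  have hconjH : ∀ X : Matrix (Fin 2) (Fin 2) ℂ,
      conjMap ((Vmat hd)ᴴ) X = (Vmat hd)ᴴ * X * Vmat hd := by
    intro X; rw [conjMap_apply, Matrix.conjTranspose_conjTranspose]
  -- entries of supported matrices vanish outside the 2x2 block
  have hzero : ∀ A : Matrix (Fin d) (Fin d) ℂ, A.PosSemidef →
      LinearMap.range (Matrix.toLin' A) =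
        Submodule.span ℂ {Pi.single (⟨0, by omega⟩ : Fin d) (1:ℂ),
          Pi.single (⟨1, by omega⟩ : Fin d) (1:ℂ)} →
      ∀ i j : Fin d, ¬ ((i:ℕ) < 2 ∧ (j:ℕ) < 2) → A i j = 0 := by
    intro A hA hr i j hij
    have hcol : ∀ (jc i' : Fin d), ¬ (i':ℕ) < 2 → A i' jc = 0 := by
      intro jc i' hi'
      have hmem : (fun i => A i jc) ∈ LinearMap.range (Matrix.toLin' A) := by
        refine ⟨Pi.single jc 1, ?_⟩
        ext i2
        simp [Matrix.toLin'_apply, Matrix.mulVec_single]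
      rw [hr, Submodule.mem_span_pair] at hmem
      obtain ⟨a, b, hab⟩ := hmem
      have h0 : i' ≠ (⟨0, by omega⟩ : Fin d) := by
        intro h; rw [h] at hi'; exact hi' (by norm_num)
      have h1 : i' ≠ (⟨1, by omega⟩ : Fin d) := by
        intro h; rw [h] at hi'; exact hi' (by norm_num)
      have h2 := congrFun hab i'
      simpa [Pi.single_apply, h0, h1] using h2.symm
    by_cases hi : (i:ℕ) < 2
    · have hj : ¬ (j:ℕ) < 2 := fun hh => hij ⟨hi, hh⟩
      have hz := hcol i j hj
      have hherm := congrFun (congrFun hA.1 i) j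
      rw [Matrix.conjTranspose_apply] at hherm
      rw [← hherm, hz, star_zero]
    · exact hcol j i hi
  have hρ0 := hzero ρ hρ hsuppρ
  have hσ0 := hzero σ hσ hsuppσ
  have hembed_eq : ∀ A : Matrix (Fin d) (Fin d) ℂ,
      (∀ i j : Fin d, ¬ ((i:ℕ) < 2 ∧ (j:ℕ) < 2) → A i j = 0) →
      (Vmat hd)ᴴ * restrict2 hd A * Vmat hd = A := by
    intro A hA0
    ext i j
    by_cases hij : (i:ℕ) < 2 ∧ (j:ℕ) < 2
    · obtain ⟨hi, hj⟩ := hij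
      have hci : Fin.castLE hd ⟨(i:ℕ), hi⟩ = i := Fin.ext rfl
      have hcj : Fin.castLE hd ⟨(j:ℕ), hj⟩ = j := Fin.ext rfl
      have hlow := embed_apply_low hd (restrict2 hd A) ⟨(i:ℕ), hi⟩ ⟨(j:ℕ), hj⟩
      rw [hci, hcj] at hlow
      rw [hlow]
      show A (Fin.castLE hd ⟨(i:ℕ), hi⟩) (Fin.castLE hd ⟨(j:ℕ), hj⟩) = A i j
      rw [hci, hcj]
    · rw [embed_apply_high hd _ hij, hA0 i j hij]
  have he01 : Real.exp (-β * En ⟨0, by omega⟩) + Real.exp (-β * En ⟨1, by omega⟩) ≠ 0 := by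
    positivity
  have hcp : cR * p = Real.exp (-β * En ⟨0, by omega⟩) / Z := by
    rw [hp, hcRdef]; field_simp
  have hcq : cR * (1 - p) = Real.exp (-β * En ⟨1, by omega⟩) / Z := by
    rw [hp, hcRdef]; field_simp; ring
  have hrγ : restrict2 hd γ = (cR : ℂ) • γ2 := by
    ext a b
    rw [hγ2]
    by_cases hab : a = b
    · subst hab
      show γ (Fin.castLE hd a) (Fin.castLE hd a) = _
      rw [hγ, Matrix.diagonal_apply_eq, Matrix.smul_apply, Matrix.diagonal_apply_eq]
      fin_cases a
      · rw [show (Fin.castLE hd (⟨0, by norm_num⟩ : Fin 2) : Fin d) = ⟨0, by omega⟩ from rfl]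
        show ((Real.exp (-β * En ⟨0, by omega⟩) / Z : ℝ) : ℂ) = (cR : ℂ) • (p : ℂ)
        rw [smul_eq_mul, show ((cR:ℂ) * (p:ℂ)) = ((cR * p : ℝ) : ℂ) by push_cast; ring, hcp]
      · rw [show (Fin.castLE hd (⟨1, by norm_num⟩ : Fin 2) : Fin d) = ⟨1, by omega⟩ from rfl]
        show ((Real.exp (-β * En ⟨1, by omega⟩) / Z : ℝ) : ℂ) = (cR : ℂ) • ((1 - p : ℝ) : ℂ)
        rw [smul_eq_mul, show ((cR:ℂ) * ((1 - p:ℝ):ℂ)) = ((cR * (1 - p) : ℝ) : ℂ) by push_cast; ring,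
          hcq]
    · have hcc : Fin.castLE hd a ≠ Fin.castLE hd b := fun h => hab (Fin.castLE_injective hd h)
      show γ (Fin.castLE hd a) (Fin.castLE hd b) = _
      rw [hγ, Matrix.diagonal_apply_ne _ hcc, Matrix.smul_apply, Matrix.diagonal_apply_ne _ hab,
        smul_zero]
  set D2 : Matrix (Fin d) (Fin d) ℂ :=
    Matrix.diagonal (fun i : Fin d =>
      if (i:ℕ) < 2 then (0:ℂ) else ((Real.exp (-β * En i) / Z : ℝ) : ℂ)) with hD2def
  have hγsplit : γ = (Vmat hd)ᴴ * restrict2 hd γ * Vmat hd + D2 := by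
    ext i j
    rw [Matrix.add_apply]
    by_cases hij : (i:ℕ) < 2 ∧ (j:ℕ) < 2
    · obtain ⟨hi, hj⟩ := hij
      have hci : Fin.castLE hd ⟨(i:ℕ), hi⟩ = i := Fin.ext rfl
      have hcj : Fin.castLE hd ⟨(j:ℕ), hj⟩ = j := Fin.ext rfl
      have hlow := embed_apply_low hd (restrict2 hd γ) ⟨(i:ℕ), hi⟩ ⟨(j:ℕ), hj⟩
      rw [hci, hcj] at hlow
      rw [hlow]
      have hD0 : D2 i j = 0 := by
        rw [hD2def]
        by_cases hij2 : i = j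
        · subst hij2; rw [Matrix.diagonal_apply_eq]; simp [hi]
        · rw [Matrix.diagonal_apply_ne _ hij2]
      rw [hD0, add_zero]
      show γ i j = γ (Fin.castLE hd ⟨(i:ℕ), hi⟩) (Fin.castLE hd ⟨(j:ℕ), hj⟩)
      rw [hci, hcj]
    · rw [embed_apply_high hd _ hij, zero_add, hγ, hD2def]
      by_cases hij2 : i = j
      · subst hij2
        have hi2 : ¬ (i:ℕ) < 2 := fun h => hij ⟨h, h⟩
        rw [Matrix.diagonal_apply_eq, Matrix.diagonal_apply_eq]
        simp [hi2]
      · rw [Matrix.diagonal_apply_ne _ hij2, Matrix.diagonal_apply_ne _ hij2]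
  constructor
  · rintro ⟨Φ, hΦcp, hΦtp, hΦρ, hΦγ⟩
    have hρ2psd : (restrict2 hd ρ).PosSemidef := by
      rw [restrict2_eq hd ρ]; exact hρ.mul_mul_conjTranspose_same _
    have hρ2pd : (restrict2 hd ρ).PosDef := by
      refine Matrix.posDef_iff_dotProduct_mulVec.mpr ⟨hρ2psd.1, fun x hx => ?_⟩
      have hne : star x ⬝ᵥ (restrict2 hd ρ) *ᵥ x ≠ 0 := by
        intro h0
        have hker := (hρ2psd.dotProduct_mulVec_zero_iff x).mp h0
        set x' : Fin d → ℂ := fun i => if h : (i:ℕ) < 2 then x ⟨(i:ℕ), h⟩ else 0 with hx'def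
        have hx'zero : ∀ j : Fin d, ¬ (j:ℕ) < 2 → x' j = 0 := by
          intro j hj; rw [hx'def]; exact dif_neg hj
        have hbig : ρ *ᵥ x' = 0 := by
          funext i
          show (fun j => ρ i j) ⬝ᵥ x' = 0
          by_cases hi : (i:ℕ) < 2
          · have hcast : ∀ b : Fin 2, x' (Fin.castLE hd b) = x b := by
              intro b
              have hb : ((Fin.castLE hd b : Fin d) : ℕ) < 2 := by simpa using b.isLt
              show (if h : ((Fin.castLE hd b : Fin d) : ℕ) < 2
                  then x ⟨((Fin.castLE hd b : Fin d) : ℕ), h⟩ else 0) = x b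
              rw [dif_pos hb]
              exact congrArg x (Fin.ext (by simp))
            have hsum : (fun j => ρ i j) ⬝ᵥ x' = ∑ b : Fin 2, ρ i (Fin.castLE hd b) * x b := by
              rw [dotProduct]
              rw [sum_eq_sum_fin2 hd (fun j => ρ i j * x' j)
                (fun j hj => by show ρ i j * x' j = 0; rw [hx'zero j hj, mul_zero])]
              exact Finset.sum_congr rfl fun b _ => by rw [hcast b]
            rw [hsum]
            have hker' := congrFun hker ⟨(i:ℕ), hi⟩
            have hci : Fin.castLE hd ⟨(i:ℕ), hi⟩ = i := Fin.ext rfl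
            calc ∑ b : Fin 2, ρ i (Fin.castLE hd b) * x b
                = (restrict2 hd ρ *ᵥ x) ⟨(i:ℕ), hi⟩ := by
                  show _ = ∑ b : Fin 2, restrict2 hd ρ ⟨(i:ℕ), hi⟩ b * x b
                  exact Finset.sum_congr rfl fun b _ => by
                    show ρ i (Fin.castLE hd b) * x b
                      = ρ (Fin.castLE hd ⟨(i:ℕ), hi⟩) (Fin.castLE hd b) * x b
                    rw [hci]
              _ = 0 := hker'
          · apply Finset.sum_eq_zero
            intro j _
            show ρ i j * x' j = 0
            rw [hρ0 i j (fun hc => hi hc.1), zero_mul]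
        have hcomp : ∀ v : Fin d, (Pi.single v 1 : Fin d → ℂ) ∈
            Submodule.span ℂ {Pi.single (⟨0, by omega⟩ : Fin d) (1:ℂ),
              Pi.single (⟨1, by omega⟩ : Fin d) (1:ℂ)} → x' v = 0 := by
          intro v hv
          rw [← hsuppρ] at hv
          obtain ⟨u, hu⟩ := hv
          have h1 : star x' ⬝ᵥ (Matrix.toLin' ρ u) = star (x' v) := by
            rw [hu, dotProduct_single, mul_one, Pi.star_apply]
          have h2 : star x' ⬝ᵥ (Matrix.toLin' ρ u) = 0 := by
            rw [Matrix.toLin'_apply, Matrix.dotProduct_mulVec]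
            have h3 : star x' ᵥ* ρ = 0 := by
              have h4 : star x' ᵥ* ρᴴ = 0 := by
                rw [← Matrix.star_mulVec, hbig, star_zero]
              rw [← hρ.1, h4]
            rw [h3, zero_dotProduct]
          have h5 : star (x' v) = 0 := by rw [← h1, h2]
          simpa using h5
        have hx0 : x 0 = 0 := by
          have h6 := hcomp ⟨0, by omega⟩ (Submodule.subset_span (by simp))
          rw [hx'def] at h6
          simpa using h6
        have hx1 : x 1 = 0 := by
          have h6 := hcomp ⟨1, by omega⟩ (Submodule.subset_span (by simp))
          rw [hx'def] at h6
          simpa using h6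
        apply hx
        funext a
        fin_cases a
        · exact hx0
        · exact hx1
      exact lt_of_le_of_ne (hρ2psd.dotProduct_mulVec_nonneg x) (Ne.symm hne)
    have hγ2psd : γ2.PosSemidef := by
      rw [hγ2]
      refine Matrix.posSemidef_diagonal_iff.mpr fun i => ?_
      fin_cases i
      · simpa using Complex.zero_le_real.mpr hp0.le
      · simpa using Complex.zero_le_real.mpr (by linarith : (0:ℝ) ≤ 1 - p)
    obtain ⟨t, ht, hts⟩ := exists_coe_smul_sub_posSemidef hρ2pd hγ2psd
    set G : Matrix (Fin d) (Fin d) ℂ := Φ ((Vmat hd)ᴴ * γ2 * Vmat hd) with hGdef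
    have hEGpsd : ((Vmat hd)ᴴ * γ2 * Vmat hd).PosSemidef :=
      hγ2psd.conjTranspose_mul_mul_same _
    have hGpsd : G.PosSemidef := isCP_posSemidef hΦcp hEGpsd
    have hsub : ((t:ℂ) • σ - G).PosSemidef := by
      have hlift : (t:ℂ) • ρ - (Vmat hd)ᴴ * γ2 * Vmat hd
          = (Vmat hd)ᴴ * ((t:ℂ) • restrict2 hd ρ - γ2) * Vmat hd := by
        rw [Matrix.mul_sub, Matrix.sub_mul, Matrix.mul_smul, Matrix.smul_mul,
          hembed_eq ρ hρ0]
      have hpsd1 : ((t:ℂ) • ρ - (Vmat hd)ᴴ * γ2 * Vmat hd).PosSemidef := by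
        rw [hlift]; exact hts.conjTranspose_mul_mul_same _
      have h7 := isCP_posSemidef hΦcp hpsd1
      rwa [map_sub, _root_.map_smul, hΦρ] at h7
    have hGdiag : ∀ i : Fin d, ¬ (i:ℕ) < 2 → G i i = 0 := by
      intro i hi
      have h1 := psd_diag_nonneg hsub i
      rw [Matrix.sub_apply, Matrix.smul_apply, hσ0 i i (fun hc => hi hc.1), smul_zero,
        zero_sub] at h1
      exact le_antisymm (neg_nonneg.mp h1) (psd_diag_nonneg hGpsd i)
    have hγΦ : γ = (cR:ℂ) • G + Φ D2 := by
      conv_lhs => rw [← hΦγ, hγsplit]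
      rw [map_add]
      congr 1
      rw [hrγ, Matrix.mul_smul, Matrix.smul_mul, _root_.map_smul]
    set R : Matrix (Fin d) (Fin d) ℂ := Φ D2 with hRdef
    have hD2psd : D2.PosSemidef := by
      rw [hD2def]
      refine Matrix.posSemidef_diagonal_iff.mpr fun i => ?_
      by_cases h : (i:ℕ) < 2
      · simp [h]
      · simp only [h, if_false]
        exact Complex.zero_le_real.mpr (div_nonneg (Real.exp_pos _).le hZpos.le)
    have hRpsd : R.PosSemidef := isCP_posSemidef hΦcp hD2psd
    have hRdiag : ∀ i : Fin d, ¬ (i:ℕ) < 2 → R i i = ((Real.exp (-β * En i) / Z : ℝ) : ℂ) := by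
      intro i hi
      have h8 := congrFun (congrFun hγΦ i) i
      rw [Matrix.add_apply, Matrix.smul_apply, hGdiag i hi, smul_zero, zero_add] at h8
      rw [← h8, hγ, Matrix.diagonal_apply_eq]
    have htrR : R.trace = ∑ i : Fin d, (if (i:ℕ) < 2 then 0 else R i i) := by
      rw [hRdef, hΦtp, hD2def, Matrix.trace_diagonal]
      apply Finset.sum_congr rfl
      intro i _
      by_cases h : (i:ℕ) < 2
      · simp [h]
      · simp only [h, if_false]
        exact (hRdiag i h).symm
    have htrrR : (restrict2 hd R).trace = 0 := by
      have h9 := trace_split hd R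
      linear_combination htrR - h9
    have hrRpsd : (restrict2 hd R).PosSemidef := by
      rw [restrict2_eq]; exact hRpsd.mul_mul_conjTranspose_same _
    have htr2 : (restrict2 hd R) 0 0 + (restrict2 hd R) 1 1 = 0 := by
      have h10 : (restrict2 hd R).trace = (restrict2 hd R) 0 0 + (restrict2 hd R) 1 1 := by
        simp [Matrix.trace, Matrix.diag, Fin.sum_univ_two]
      rw [← h10, htrrR]
    have h00 : (restrict2 hd R) 0 0 = 0 := by
      refine le_antisymm ?_ (psd_diag_nonneg hrRpsd 0)
      have h11 := psd_diag_nonneg hrRpsd 1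
      have h12 : (restrict2 hd R) 0 0 = -((restrict2 hd R) 1 1) := by linear_combination htr2
      rw [h12]
      exact neg_nonpos.mpr h11
    have h11 : (restrict2 hd R) 1 1 = 0 := by
      refine le_antisymm ?_ (psd_diag_nonneg hrRpsd 1)
      have h13 := psd_diag_nonneg hrRpsd 0
      have h12 : (restrict2 hd R) 1 1 = -((restrict2 hd R) 0 0) := by linear_combination htr2
      rw [h12]
      exact neg_nonpos.mpr h13
    have hrRdiag : ∀ a : Fin 2, (restrict2 hd R) a a = 0 := by
      intro a
      fin_cases a
      · exact h00
      · exact h11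
    have hrR0 : restrict2 hd R = 0 := by
      ext a b
      rw [Matrix.zero_apply]
      exact psd_col_eq_zero hrRpsd (hrRdiag b) a
    have hrG : restrict2 hd G = γ2 := by
      have hres : restrict2 hd γ = (cR:ℂ) • restrict2 hd G + restrict2 hd R := by
        ext a b
        show γ (Fin.castLE hd a) (Fin.castLE hd b) = _
        rw [hγΦ, Matrix.add_apply, Matrix.smul_apply]
        rfl
      rw [hrR0, add_zero, hrγ] at hres
      have hcne : ((cR:ℝ):ℂ) ≠ 0 := by exact_mod_cast ne_of_gt hcR0
      exact (smul_right_injective _ hcne hres).symm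
    -- Kraus operators for the dump-to-γ2 channel
    set w : Fin 2 → ℝ := ![p, 1 - p] with hwdef
    have hw0 : ∀ m : Fin 2, 0 ≤ w m := by
      intro m
      fin_cases m
      · simpa [hwdef] using hp0.le
      · show (0:ℝ) ≤ w 1
        rw [hwdef]
        show (0:ℝ) ≤ 1 - p
        linarith
    set K : Fin d × Fin 2 → Matrix (Fin 2) (Fin d) ℂ :=
      fun y => (if (y.1:ℕ) < 2 then 0 else ((Real.sqrt (w y.2) : ℝ) : ℂ)) •
        Matrix.single y.2 y.1 1 with hKdef
    have hKapp : ∀ (y : Fin d × Fin 2) (B : Matrix (Fin d) (Fin d) ℂ),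
        conjMap (K y) B = (if (y.1:ℕ) < 2 then 0 else ((w y.2 : ℝ):ℂ) * B y.1 y.1) •
          Matrix.single y.2 y.2 (1:ℂ) := by
      intro y B
      rw [conjMap_apply, hKdef]
      by_cases hy : (y.1:ℕ) < 2
      · simp [hy]
      · simp only [hy, if_false]
        have hSS : Matrix.single y.2 y.1 (1:ℂ) * B *
            (Matrix.single y.2 y.1 (1:ℂ))ᴴ
            = B y.1 y.1 • Matrix.single y.2 y.2 (1:ℂ) := by
          ext a b
          simp only [Matrix.single, Matrix.of_apply, Matrix.mul_apply,
            Matrix.conjTranspose_apply, Matrix.smul_apply, smul_eq_mul,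
            apply_ite (star : ℂ → ℂ), star_one, star_zero, ite_mul, mul_ite,
            one_mul, mul_one, zero_mul, mul_zero, ite_and,
            Finset.sum_ite_irrel, Finset.sum_const_zero, Finset.sum_ite_eq,
            Finset.sum_ite_eq', Finset.mem_univ, if_true]
          by_cases ha : y.2 = a <;> by_cases hb : y.2 = b <;> simp [ha, hb, mul_comm]
        rw [Matrix.smul_mul, Matrix.smul_mul, Matrix.conjTranspose_smul,
          Matrix.mul_smul, hSS]
        rw [smul_smul, smul_smul]
        congr 1
        rw [Complex.star_def, Complex.conj_ofReal]
        rw [show ((Real.sqrt (w y.2) : ℝ) : ℂ) * ((Real.sqrt (w y.2) : ℝ) : ℂ) * B y.1 y.1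
            = ((Real.sqrt (w y.2) * Real.sqrt (w y.2) : ℝ) : ℂ) * B y.1 y.1 by push_cast; ring]
        rw [Real.mul_self_sqrt (hw0 y.2)]
    set Ψ : Matrix (Fin d) (Fin d) ℂ →ₗ[ℂ] Matrix (Fin 2) (Fin 2) ℂ :=
      conjMap (Vmat hd) + ∑ y : Fin d × Fin 2, conjMap (K y) with hΨdef
    have hγ2sum : ∑ m : Fin 2, ((w m : ℝ):ℂ) • Matrix.single m m (1:ℂ) = γ2 := by
      rw [hγ2]
      ext a b
      fin_cases a <;> fin_cases b <;>
        simp [Fin.sum_univ_two, Matrix.single, hwdef, Matrix.diagonal]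
    have hΨapp : ∀ B : Matrix (Fin d) (Fin d) ℂ,
        Ψ B = restrict2 hd B + (∑ i : Fin d, if (i:ℕ) < 2 then 0 else B i i) • γ2 := by
      intro B
      rw [hΨdef]
      simp only [LinearMap.add_apply, LinearMap.sum_apply]
      congr 1
      · exact (restrict2_eq hd B).symm
      · rw [Fintype.sum_prod_type]
        have hinner : ∀ i : Fin d, (∑ m : Fin 2, conjMap (K (i, m)) B)
            = (if (i:ℕ) < 2 then 0 else B i i) • γ2 := by
          intro i
          by_cases hi : (i:ℕ) < 2
          · simp [hKapp, hi]
          · simp only [hKapp, hi, if_false]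
            rw [← hγ2sum, Finset.smul_sum]
            apply Finset.sum_congr rfl
            intro m _
            rw [smul_smul, mul_comm]
        rw [Finset.sum_congr rfl (fun i _ => hinner i), ← Finset.sum_smul]
    refine ⟨Ψ ∘ₗ Φ ∘ₗ conjMap ((Vmat hd)ᴴ), ?_, ?_, ?_, ?_⟩
    · exact isCP_comp
        (isCP_add (isCP_conjMap _) (isCP_sum _ _ fun y _ => isCP_conjMap _))
        (isCP_comp hΦcp (isCP_conjMap _))
    · intro A
      simp only [LinearMap.comp_apply]
      rw [hconjH, hΨapp, Matrix.trace_add, Matrix.trace_smul]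
      have hγ2tr : γ2.trace = 1 := by
        rw [hγ2, Matrix.trace_diagonal, Fin.sum_univ_two]
        show (p:ℂ) + ((1 - p:ℝ):ℂ) = 1
        push_cast
        ring
      rw [hγ2tr, smul_eq_mul, mul_one, ← trace_split hd, hΦtp, trace_embed hd]
    · simp only [LinearMap.comp_apply]
      rw [hconjH, hembed_eq ρ hρ0, hΦρ, hΨapp]
      have hzσ : (∑ i : Fin d, if (i:ℕ) < 2 then 0 else σ i i) = 0 := by
        apply Finset.sum_eq_zero
        intro i _
        by_cases h : (i:ℕ) < 2
        · simp [h]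
        · simp [h, hσ0 i i (fun hc => h hc.1)]
      rw [hzσ, zero_smul, add_zero]
    · simp only [LinearMap.comp_apply]
      rw [hconjH, ← hGdef, hΨapp, hrG]
      have hzG : (∑ i : Fin d, if (i:ℕ) < 2 then 0 else G i i) = 0 := by
        apply Finset.sum_eq_zero
        intro i _
        by_cases h : (i:ℕ) < 2
        · simp [h]
        · simp [h, hGdiag i h]
      rw [hzG, zero_smul, add_zero]
  · rintro ⟨E, hEcp, hEtp, hEρ, hEγ2⟩
    set Q : Matrix (Fin d) (Fin d) ℂ :=
      Matrix.diagonal (fun i : Fin d => if (i:ℕ) < 2 then 0 else 1) with hQdef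
    have hQH : Qᴴ = Q := by
      rw [hQdef, Matrix.diagonal_conjTranspose]
      have hstar : (star fun i : Fin d => if (i:ℕ) < 2 then (0:ℂ) else 1)
          = fun i : Fin d => if (i:ℕ) < 2 then (0:ℂ) else 1 := by
        funext i
        by_cases h : (i:ℕ) < 2 <;> simp [Pi.star_apply, h] <;> omega
      rw [hstar]
    have hQapp : ∀ (A : Matrix (Fin d) (Fin d) ℂ) (i j : Fin d),
        (conjMap Q A) i j = (if (i:ℕ) < 2 then 0 else 1) * A i j *
          (if (j:ℕ) < 2 then 0 else 1) := by
      intro A i j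
      rw [conjMap_apply, hQH, hQdef, Matrix.mul_diagonal, Matrix.diagonal_mul]
    refine ⟨conjMap ((Vmat hd)ᴴ) ∘ₗ E ∘ₗ conjMap (Vmat hd) + conjMap Q, ?_, ?_, ?_, ?_⟩
    · exact isCP_add
        (isCP_comp (isCP_conjMap _) (isCP_comp hEcp (isCP_conjMap _)))
        (isCP_conjMap _)
    · intro A
      simp only [LinearMap.add_apply, LinearMap.comp_apply]
      rw [Matrix.trace_add]
      have hV : conjMap (Vmat hd) A = restrict2 hd A := (restrict2_eq hd A).symm
      rw [hV, hconjH, trace_embed hd, hEtp]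
      have hQtr : (conjMap Q A).trace = ∑ i : Fin d, (if (i:ℕ) < 2 then 0 else A i i) := by
        rw [Matrix.trace]
        apply Finset.sum_congr rfl
        intro i _
        show (conjMap Q A) i i = _
        rw [hQapp]
        by_cases h : (i:ℕ) < 2 <;> simp [h]
      rw [hQtr]
      exact (trace_split hd A).symm
    · simp only [LinearMap.add_apply, LinearMap.comp_apply]
      have hV : conjMap (Vmat hd) ρ = restrict2 hd ρ := (restrict2_eq hd ρ).symm
      rw [hV, hEρ, hconjH, hembed_eq σ hσ0]
      have hQρ : conjMap Q ρ = 0 := by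
        ext i j
        rw [hQapp, Matrix.zero_apply]
        by_cases hi : (i:ℕ) < 2
        · simp [hi]
        · rw [hρ0 i j (fun hc => hi hc.1)]; simp
      rw [hQρ, add_zero]
    · simp only [LinearMap.add_apply, LinearMap.comp_apply]
      have hV : conjMap (Vmat hd) γ = restrict2 hd γ := (restrict2_eq hd γ).symm
      have hEγ : E (restrict2 hd γ) = restrict2 hd γ := by
        rw [hrγ, _root_.map_smul, hEγ2]
      rw [hV, hEγ, hconjH]
      have hQγ : conjMap Q γ = D2 := by
        ext i j
        rw [hQapp, hγ, hD2def]
        by_cases hij2 : i = j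
        · subst hij2
          rw [Matrix.diagonal_apply_eq, Matrix.diagonal_apply_eq]
          by_cases h : (i:ℕ) < 2 <;> simp [h]
        · rw [Matrix.diagonal_apply_ne _ hij2, Matrix.diagonal_apply_ne _ hij2]; simp
      rw [hQγ]
      exact hγsplit.symm
end

section
/- Let (ρ₁,ρ₂) be density matrices on ℂ^n and (ρ₁′,ρ₂′) be density matrices on ℂ^m with ρ₁′ ≠ ρ₂′ and supp(ρ₁′) ⊆ supp(ρ₂′). Set M′ := inf{ λ : λρ₂′ − ρ₁′ ≥ 0 } and m′ := sup{ λ : ρ₁′ − λρ₂′ ≥ 0 }. Then there exists a test-and-prepare channel ℰ(ρ) = Tr[Eρ]·ξ₁ + Tr[(𝟙−E)ρ]·ξ₂ with ℰ(ρ₁) = ρ₁′ and ℰ(ρ₂) = ρ₂′ if and only if there exists an operator 0 ≤ E ≤ 𝟙ₙ with Tr[E(ρ₁ − M′ρ₂)] ≥ 0 and Tr[E(ρ₁ − m′ρ₂)] ≥ 1 − m′. -/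
open scoped ComplexOrder

/-- `sup(A/B) = inf { λ : λB - A ≥ 0 }`. -/
noncomputable def supRatio {k : ℕ} (A B : Matrix (Fin k) (Fin k) ℂ) : ℝ :=
  sInf { lam : ℝ | ((lam : ℂ) • B - A).PosSemidef }

/-- `inf(A/B) = sup { λ : A - λB ≥ 0 }`. -/
noncomputable def infRatio {k : ℕ} (A B : Matrix (Fin k) (Fin k) ℂ) : ℝ :=
  sSup { lam : ℝ | (A - (lam : ℂ) • B).PosSemidef }

open Matrix

variable {k : ℕ}

lemma herm_form_real {M : Matrix (Fin k) (Fin k) ℂ} (hM : M.IsHermitian) (x : Fin k → ℂ) :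
    (star x ⬝ᵥ M *ᵥ x).im = 0 := by
  have h : (starRingEnd ℂ) (star x ⬝ᵥ M *ᵥ x) = star x ⬝ᵥ M *ᵥ x := by
    calc (starRingEnd ℂ) (star x ⬝ᵥ M *ᵥ x) = star (star x ⬝ᵥ M *ᵥ x) := rfl
    _ = star (M *ᵥ x) ⬝ᵥ star (star x) := by rw [star_dotProduct_star]
    _ = star (M *ᵥ x) ⬝ᵥ x := by rw [star_star]
    _ = (star x ᵥ* Mᴴ) ⬝ᵥ x := by rw [star_mulVec]
    _ = (star x ᵥ* M) ⬝ᵥ x := by rw [hM.eq]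
    _ = star x ⬝ᵥ M *ᵥ x := by rw [dotProduct_mulVec]
  exact Complex.conj_eq_iff_im.mp h

lemma psd_trace_nonneg {M : Matrix (Fin k) (Fin k) ℂ} (hM : M.PosSemidef) :
    0 ≤ M.trace := by
  rw [Matrix.trace]
  apply Finset.sum_nonneg
  intro i _
  have := hM.dotProduct_mulVec_nonneg (Pi.single i 1)
  simpa [Matrix.mulVec_single, dotProduct, Pi.single_apply, apply_ite] using this

open scoped MatrixOrder in
lemma psd_eq_conjTranspose_mul_self' {ρ : Matrix (Fin k) (Fin k) ℂ} (hρ : ρ.PosSemidef) :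
    ∃ C : Matrix (Fin k) (Fin k) ℂ, ρ = Cᴴ * C := by
  obtain ⟨C, hC⟩ := CStarAlgebra.nonneg_iff_eq_star_mul_self.mp hρ.nonneg
  exact ⟨C, hC⟩

lemma psd_mul_trace_nonneg {E ρ : Matrix (Fin k) (Fin k) ℂ} (hE : E.PosSemidef)
    (hρ : ρ.PosSemidef) : 0 ≤ (E * ρ).trace := by
  obtain ⟨C, rfl⟩ := psd_eq_conjTranspose_mul_self' hρ
  have h1 : (E * (Cᴴ * C)).trace = (C * E * Cᴴ).trace := by
    rw [← Matrix.mul_assoc, Matrix.trace_mul_cycle]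
  rw [h1]
  exact psd_trace_nonneg (hE.mul_mul_conjTranspose_same C)

lemma psd_smul_real {M : Matrix (Fin k) (Fin k) ℂ} (hM : M.PosSemidef) {r : ℝ} (hr : 0 ≤ r) :
    ((r : ℂ) • M).PosSemidef := by
  refine Matrix.PosSemidef.of_dotProduct_mulVec_nonneg ?_ ?_
  · rw [Matrix.IsHermitian, conjTranspose_smul, hM.1.eq]
    simp
  · intro x
    rw [Matrix.smul_mulVec, dotProduct_smul]
    exact smul_nonneg (by exact_mod_cast Complex.zero_le_real.mpr hr) (hM.dotProduct_mulVec_nonneg x)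

lemma psd_trace_zero {M : Matrix (Fin k) (Fin k) ℂ} (hM : M.PosSemidef)
    (h : M.trace = 0) : M = 0 := by
  have hdiag : ∀ i, M i i = 0 := by
    intro i
    have hnn : ∀ j : Fin k, 0 ≤ M j j := by
      intro j
      have := hM.dotProduct_mulVec_nonneg (Pi.single j 1)
      simpa [Matrix.mulVec_single, dotProduct, Pi.single_apply, apply_ite] using this
    have := (Finset.sum_eq_zero_iff_of_nonneg (fun j _ => hnn j)).mp h i (Finset.mem_univ i)
    exact this
  ext i j
  have hcol : M *ᵥ Pi.single j 1 = 0 := by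
    rw [← hM.dotProduct_mulVec_zero_iff]
    simp [Matrix.mulVec_single, dotProduct, Pi.single_apply, apply_ite, hdiag j]
  have := congrFun hcol i
  simpa [Matrix.mulVec_single] using this

lemma re_dot_self (x : Fin k → ℂ) : (star x ⬝ᵥ x).re = ∑ j, ‖x j‖ ^ 2 := by
  rw [dotProduct, Complex.re_sum]
  congr 1; ext j
  simp [Pi.star_apply, ← Complex.normSq_eq_norm_sq, Complex.normSq_apply, Complex.mul_re, sq, ← Complex.normSq_apply, Complex.normSq_eq_norm_sq, Complex.sq_norm]

lemma psd_form_le_trace {A : Matrix (Fin k) (Fin k) ℂ} (hA : A.PosSemidef) (x : Fin k → ℂ) :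
    (star x ⬝ᵥ A *ᵥ x).re ≤ A.trace.re * (star x ⬝ᵥ x).re := by
  obtain ⟨C, rfl⟩ := psd_eq_conjTranspose_mul_self' hA
  have h1 : star x ⬝ᵥ (Cᴴ * C) *ᵥ x = star (C *ᵥ x) ⬝ᵥ (C *ᵥ x) := by
    rw [← Matrix.mulVec_mulVec, Matrix.dotProduct_mulVec, vecMul_conjTranspose, star_star]
  have htr : (Cᴴ * C).trace.re = ∑ i, ∑ j, ‖C i j‖ ^ 2 := by
    rw [Matrix.trace, Complex.re_sum, Finset.sum_comm]
    congr 1; ext i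
    rw [Matrix.diag, Matrix.mul_apply, Complex.re_sum]
    congr 1; ext j
    simp [Matrix.conjTranspose_apply, ← Complex.normSq_eq_norm_sq, Complex.normSq_apply,
      Complex.mul_re, sq, ← Complex.normSq_apply, Complex.normSq_eq_norm_sq, Complex.sq_norm]
  rw [h1, re_dot_self, re_dot_self, htr]
  have hCS : ∀ i, ‖(C *ᵥ x) i‖ ^ 2 ≤ (∑ j, ‖C i j‖ ^ 2) * ∑ j, ‖x j‖ ^ 2 := by
    intro i
    have h2 : ‖(C *ᵥ x) i‖ ≤ ∑ j, ‖C i j‖ * ‖x j‖ := by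
      calc ‖(C *ᵥ x) i‖ = ‖∑ j, C i j * x j‖ := rfl
        _ ≤ ∑ j, ‖C i j * x j‖ := norm_sum_le _ _
        _ = ∑ j, ‖C i j‖ * ‖x j‖ := by simp [norm_mul]
    calc ‖(C *ᵥ x) i‖ ^ 2 ≤ (∑ j, ‖C i j‖ * ‖x j‖) ^ 2 := by
          apply pow_le_pow_left₀ (norm_nonneg _) h2
      _ ≤ (∑ j, ‖C i j‖ ^ 2) * ∑ j, ‖x j‖ ^ 2 :=
          Finset.sum_mul_sq_le_sq_mul_sq _ _ _
  calc ∑ i, ‖(C *ᵥ x) i‖ ^ 2 ≤ ∑ i, (∑ j, ‖C i j‖ ^ 2) * ∑ j, ‖x j‖ ^ 2 :=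
        Finset.sum_le_sum fun i _ => hCS i
    _ = (∑ i, ∑ j, ‖C i j‖ ^ 2) * ∑ j, ‖x j‖ ^ 2 := by rw [← Finset.sum_mul]

lemma herm_real_smul_sub {A B : Matrix (Fin k) (Fin k) ℂ} (hA : A.IsHermitian)
    (hB : B.IsHermitian) (r : ℝ) : (((r : ℂ) • B) - A).IsHermitian := by
  rw [Matrix.IsHermitian, Matrix.conjTranspose_sub, Matrix.conjTranspose_smul, hA.eq, hB.eq]
  simp

lemma sum_dotProduct' {ι : Type*} (s : Finset ι) (f : ι → Fin k → ℂ) (v : Fin k → ℂ) :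
    (∑ i ∈ s, f i) ⬝ᵥ v = ∑ i ∈ s, f i ⬝ᵥ v := by
  simp only [dotProduct, Finset.sum_apply, Finset.sum_mul]
  rw [Finset.sum_comm]

lemma dotProduct_sum' {ι : Type*} (s : Finset ι) (v : Fin k → ℂ) (f : ι → Fin k → ℂ) :
    v ⬝ᵥ (∑ i ∈ s, f i) = ∑ i ∈ s, v ⬝ᵥ f i := by
  simp only [dotProduct, Finset.sum_apply, Finset.mul_sum]
  rw [Finset.sum_comm]

lemma mulVec_sum' {ι : Type*} (s : Finset ι) (B : Matrix (Fin k) (Fin k) ℂ)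
    (f : ι → Fin k → ℂ) : B *ᵥ (∑ i ∈ s, f i) = ∑ i ∈ s, B *ᵥ f i := by
  funext j
  simp only [Matrix.mulVec, dotProduct, Finset.sum_apply, Finset.mul_sum]
  rw [Finset.sum_comm]

lemma exists_smul_sub_psd {A B : Matrix (Fin k) (Fin k) ℂ}
    (hA : A.PosSemidef) (hB : B.PosSemidef) (hBne : B ≠ 0)
    (hker : ∀ x, B *ᵥ x = 0 → A *ᵥ x = 0) :
    ∃ lam : ℝ, ((lam : ℂ) • B - A).PosSemidef := by
  classical
  have hH := hB.1
  set d : Fin k → ℝ := hH.eigenvalues with hd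
  set b : Fin k → Fin k → ℂ := fun i => ⇑(hH.eigenvectorBasis i) with hbdef
  have f1 : ∀ i, B *ᵥ b i = (d i : ℂ) • b i := by
    intro i
    calc B *ᵥ b i = (d i) • b i := hH.mulVec_eigenvectorBasis i
      _ = (d i : ℂ) • b i := by funext j; simp [Complex.real_smul]
  have f2 : ∀ i j, star (b i) ⬝ᵥ b j = if i = j then 1 else 0 := by
    intro i j
    have := orthonormal_iff_ite.mp hH.eigenvectorBasis.orthonormal i j
    rw [EuclideanSpace.inner_eq_star_dotProduct] at this
    rw [dotProduct_comm]
    exact this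
  have f3 : ∀ x : Fin k → ℂ, x = ∑ i, (star (b i) ⬝ᵥ x) • b i := by
    intro x
    have h := congrArg WithLp.ofLp (hH.eigenvectorBasis.sum_repr' (WithLp.toLp 2 x))
    simp only [WithLp.ofLp_sum, WithLp.ofLp_smul, EuclideanSpace.inner_eq_star_dotProduct,
      WithLp.ofLp_toLp] at h
    refine h.symm.trans ?_
    refine Finset.sum_congr rfl fun i _ => ?_
    rw [dotProduct_comm]
  have hdnn : ∀ i, 0 ≤ d i := hB.eigenvalues_nonneg
  set S : Finset (Fin k) := Finset.univ.filter (fun i => d i ≠ 0) with hSdef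
  have hS : S.Nonempty := by
    by_contra h
    apply hBne
    rw [Finset.not_nonempty_iff_eq_empty] at h
    have hz : ∀ i, d i = 0 := by
      intro i
      by_contra hi
      have : i ∈ S := by simp [hSdef, hi]
      simp [h] at this
    have hsp := hH.spectral_theorem
    rw [hsp]
    have hdiag : Matrix.diagonal (RCLike.ofReal ∘ hH.eigenvalues)
        = (0 : Matrix (Fin k) (Fin k) ℂ) := by
      ext i j
      by_cases hij : i = j <;> simp [Matrix.diagonal, hij, hz, ← hd]
    rw [hdiag]
    simp
  set ε : ℝ := S.inf' hS d with hεdef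
  have hε : 0 < ε := by
    rw [hεdef, Finset.lt_inf'_iff]
    intro i hi
    rw [hSdef, Finset.mem_filter] at hi
    exact lt_of_le_of_ne (hdnn i) (Ne.symm hi.2)
  refine ⟨A.trace.re / ε, Matrix.PosSemidef.of_dotProduct_mulVec_nonneg (herm_real_smul_sub hA.1 hB.1 _) ?_⟩
  intro x
  set c : Fin k → ℂ := fun i => star (b i) ⬝ᵥ x with hcdef
  set v : Fin k → ℂ := ∑ i ∈ S, c i • b i with hvdef
  have hBx : B *ᵥ x = ∑ i ∈ S, (c i * (d i : ℂ)) • b i := by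
    conv_lhs => rw [f3 x]
    rw [mulVec_sum']
    rw [Finset.sum_congr rfl (fun i _ => by
      rw [Matrix.mulVec_smul, f1 i, smul_smul] : ∀ i ∈ Finset.univ,
        B *ᵥ ((star (b i) ⬝ᵥ x) • b i) = (c i * (d i : ℂ)) • b i)]
    rw [← Finset.sum_subset (Finset.subset_univ S)]
    intro i _ hi
    have hdi : d i = 0 := by
      by_contra hdi
      exact hi (by simp [hSdef, hdi])
    simp [hdi]
  have hBv : B *ᵥ v = ∑ i ∈ S, (c i * (d i : ℂ)) • b i := by
    rw [hvdef, mulVec_sum']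
    exact Finset.sum_congr rfl fun i _ => by rw [Matrix.mulVec_smul, f1 i, smul_smul]
  have hBw : B *ᵥ (x - v) = 0 := by
    rw [Matrix.mulVec_sub, hBx, hBv, sub_self]
  have hAw : A *ᵥ (x - v) = 0 := hker _ hBw
  have hAx : A *ᵥ x = A *ᵥ v := by
    have h2 : A *ᵥ x - A *ᵥ v = 0 := by rw [← Matrix.mulVec_sub]; exact hAw
    linear_combination (norm := module) h2
  have hquadA : star x ⬝ᵥ A *ᵥ x = star v ⬝ᵥ A *ᵥ v := by
    rw [hAx]
    have hxvw : star x = star v + star (x - v) := by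
      rw [← star_add]; congr 1; abel
    rw [hxvw, add_dotProduct]
    have hzero : star (x - v) ⬝ᵥ A *ᵥ v = 0 := by
      rw [Matrix.dotProduct_mulVec, ← hA.1.eq, ← star_mulVec, hAw]
      simp
    rw [hzero, add_zero]
  have hvv : (star v ⬝ᵥ v) = ∑ i ∈ S, star (c i) * c i := by
    rw [hvdef, star_sum, sum_dotProduct']
    refine Finset.sum_congr rfl fun i hi => ?_
    rw [dotProduct_sum']
    rw [Finset.sum_congr rfl (fun j _ => by
      rw [star_smul, smul_dotProduct, dotProduct_smul, f2 i j] : ∀ j ∈ S, star (c i • b i) ⬝ᵥ (c j • b j)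
        = star (c i) • c j • (if i = j then (1:ℂ) else 0))]
    rw [Finset.sum_congr rfl (fun j _ => by
      by_cases hij : i = j
      · subst hij; simp [smul_eq_mul]
      · simp [hij] : ∀ j ∈ S,
        star (c i) • c j • (if i = j then (1:ℂ) else 0)
          = if i = j then star (c i) * c i else 0)]
    rw [Finset.sum_ite_eq S i (fun _ => star (c i) * c i)]
    simp [hi]
  have hxBx : star x ⬝ᵥ B *ᵥ x = ∑ i ∈ S, (d i : ℂ) * (star (c i) * c i) := by
    rw [hBx, dotProduct_sum']
    refine Finset.sum_congr rfl fun i _ => ?_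
    rw [dotProduct_smul]
    have : star x ⬝ᵥ b i = star (c i) := by
      rw [hcdef, Matrix.star_dotProduct]
    rw [this, smul_eq_mul]
    ring
  -- real parts
  have hre_vv : ∀ i, (star (c i) * c i).re = Complex.normSq (c i) := by
    intro i
    rw [Complex.star_def, ← Complex.normSq_eq_conj_mul_self, Complex.ofReal_re]
  have him : (star x ⬝ᵥ (((A.trace.re / ε : ℝ) : ℂ) • B - A) *ᵥ x).im = 0 :=
    herm_form_real (herm_real_smul_sub hA.1 hB.1 _) x
  rw [Complex.nonneg_iff]
  refine ⟨?_, by rw [him]⟩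
  have hsplit : star x ⬝ᵥ (((A.trace.re / ε : ℝ) : ℂ) • B - A) *ᵥ x
      = ((A.trace.re / ε : ℝ) : ℂ) * (star x ⬝ᵥ B *ᵥ x) - star x ⬝ᵥ A *ᵥ x := by
    rw [Matrix.sub_mulVec, dotProduct_sub, Matrix.smul_mulVec,
      dotProduct_smul]
    rfl
  rw [hsplit]
  have hBre : (star x ⬝ᵥ B *ᵥ x).re = ∑ i ∈ S, d i * Complex.normSq (c i) := by
    rw [hxBx, Complex.re_sum]
    refine Finset.sum_congr rfl fun i _ => ?_
    rw [show (d i : ℂ) * (star (c i) * c i) = ((d i : ℝ) : ℂ) * (star (c i) * c i) from rfl]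
    rw [Complex.re_ofReal_mul, hre_vv]
  have hvvre : (star v ⬝ᵥ v).re = ∑ i ∈ S, Complex.normSq (c i) := by
    rw [hvv, Complex.re_sum]
    exact Finset.sum_congr rfl fun i _ => hre_vv i
  have hAre : (star x ⬝ᵥ A *ᵥ x).re ≤ A.trace.re * ∑ i ∈ S, Complex.normSq (c i) := by
    rw [hquadA, ← hvvre]
    exact psd_form_le_trace hA v
  have hBge : ε * ∑ i ∈ S, Complex.normSq (c i) ≤ (star x ⬝ᵥ B *ᵥ x).re := by
    rw [hBre, Finset.mul_sum]
    refine Finset.sum_le_sum fun i hi => ?_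
    have h1 : ε ≤ d i := Finset.inf'_le d hi
    exact mul_le_mul_of_nonneg_right h1 (Complex.normSq_nonneg _)
  have htrnn : 0 ≤ A.trace.re := by
    have := psd_trace_nonneg hA
    exact (Complex.nonneg_iff.mp this).1
  have key : A.trace.re / ε * (star x ⬝ᵥ B *ᵥ x).re ≥ (star x ⬝ᵥ A *ᵥ x).re := by
    calc (star x ⬝ᵥ A *ᵥ x).re ≤ A.trace.re * ∑ i ∈ S, Complex.normSq (c i) := hAre
      _ = A.trace.re / ε * (ε * ∑ i ∈ S, Complex.normSq (c i)) := by
          field_simp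
      _ ≤ A.trace.re / ε * (star x ⬝ᵥ B *ᵥ x).re := by
          apply mul_le_mul_of_nonneg_left hBge (div_nonneg htrnn hε.le)
  have hBxim : (star x ⬝ᵥ B *ᵥ x).im = 0 := herm_form_real hB.1 x
  rw [Complex.sub_re, Complex.mul_re, hBxim]
  simp only [Complex.ofReal_re, Complex.ofReal_im, mul_zero, zero_mul, sub_zero]
  linarith [key]

lemma quadform_split (A B : Matrix (Fin k) (Fin k) ℂ) (lam : ℂ) (x : Fin k → ℂ) :
    star x ⬝ᵥ (lam • B - A) *ᵥ x = lam * (star x ⬝ᵥ B *ᵥ x) - star x ⬝ᵥ A *ᵥ x := by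
  rw [Matrix.sub_mulVec, dotProduct_sub, Matrix.smul_mulVec,
    dotProduct_smul]
  rfl

lemma psd_smul_sub_iff {A B : Matrix (Fin k) (Fin k) ℂ} (hA : A.IsHermitian)
    (hB : B.IsHermitian) (lam : ℝ) :
    ((lam : ℂ) • B - A).PosSemidef ↔
      ∀ x, 0 ≤ lam * (star x ⬝ᵥ B *ᵥ x).re - (star x ⬝ᵥ A *ᵥ x).re := by
  constructor
  · intro h x
    have h2 := h.dotProduct_mulVec_nonneg x
    rw [Complex.nonneg_iff] at h2
    have h3 := h2.1
    rw [quadform_split, Complex.sub_re, Complex.re_ofReal_mul] at h3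
    exact h3
  · intro h
    refine Matrix.PosSemidef.of_dotProduct_mulVec_nonneg (herm_real_smul_sub hA hB lam) fun x => ?_
    rw [Complex.nonneg_iff]
    constructor
    · rw [quadform_split, Complex.sub_re, Complex.re_ofReal_mul]
      exact h x
    · exact (herm_form_real (herm_real_smul_sub hA hB lam) x).symm

lemma isClosed_SM {A B : Matrix (Fin k) (Fin k) ℂ} (hA : A.IsHermitian) (hB : B.IsHermitian) :
    IsClosed {lam : ℝ | ((lam : ℂ) • B - A).PosSemidef} := by
  have hset : {lam : ℝ | ((lam : ℂ) • B - A).PosSemidef}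
      = ⋂ x : Fin k → ℂ, {lam : ℝ |
          0 ≤ lam * (star x ⬝ᵥ B *ᵥ x).re - (star x ⬝ᵥ A *ᵥ x).re} := by
    ext lam
    simp only [Set.mem_setOf_eq, Set.mem_iInter, psd_smul_sub_iff hA hB]
  rw [hset]
  exact isClosed_iInter fun x => isClosed_le continuous_const
    ((continuous_id.mul continuous_const).sub continuous_const)

lemma isClosed_Sm {A B : Matrix (Fin k) (Fin k) ℂ} (hA : A.IsHermitian) (hB : B.IsHermitian) :
    IsClosed {lam : ℝ | (A - (lam : ℂ) • B).PosSemidef} := by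
  have hset : {lam : ℝ | (A - (lam : ℂ) • B).PosSemidef}
      = Neg.neg ⁻¹' {lam : ℝ | ((lam : ℂ) • B - (-A)).PosSemidef} := by
    ext lam
    simp only [Set.mem_setOf_eq, Set.mem_preimage]
    have h2 : ((((-lam : ℝ)) : ℂ) • B - (-A)) = A - (lam : ℂ) • B := by
      push_cast
      module
    rw [h2]
  rw [hset]
  exact (isClosed_SM hA.neg hB).preimage
    continuous_neg

lemma psd_trace_real {M : Matrix (Fin k) (Fin k) ℂ} (hM : M.PosSemidef) :
    M.trace = ((M.trace.re : ℝ) : ℂ) ∧ 0 ≤ M.trace.re := by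
  have := psd_trace_nonneg hM
  rw [Complex.nonneg_iff] at this
  exact ⟨(Complex.ext (by simp) (by simp [this.2])), this.1⟩

lemma SM_mem_ge_one {A B : Matrix (Fin k) (Fin k) ℂ} (hAtr : A.trace = 1)
    (hBtr : B.trace = 1) {lam : ℝ} (h : ((lam : ℂ) • B - A).PosSemidef) : 1 ≤ lam := by
  have := psd_trace_nonneg h
  rw [Matrix.trace_sub, Matrix.trace_smul, hAtr, hBtr, smul_eq_mul, mul_one,
    Complex.nonneg_iff] at this
  have h1 := this.1
  simp at h1
  linarith

lemma Sm_mem_le_one {A B : Matrix (Fin k) (Fin k) ℂ} (hAtr : A.trace = 1)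
    (hBtr : B.trace = 1) {lam : ℝ} (h : (A - (lam : ℂ) • B).PosSemidef) : lam ≤ 1 := by
  have := psd_trace_nonneg h
  rw [Matrix.trace_sub, Matrix.trace_smul, hAtr, hBtr, smul_eq_mul, mul_one,
    Complex.nonneg_iff] at this
  have h1 := this.1
  simp at h1
  linarith

lemma SM_up_closed {A B : Matrix (Fin k) (Fin k) ℂ} (hB : B.PosSemidef) {lam mu : ℝ}
    (h : ((lam : ℂ) • B - A).PosSemidef) (hlm : lam ≤ mu) :
    ((mu : ℂ) • B - A).PosSemidef := by
  have h2 : ((mu : ℂ) • B - A) = ((lam : ℂ) • B - A) + (((mu - lam : ℝ)) : ℂ) • B := by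
    push_cast
    module
  rw [h2]
  exact h.add (psd_smul_real hB (by linarith))

lemma Sm_down_closed {A B : Matrix (Fin k) (Fin k) ℂ} (hB : B.PosSemidef) {lam mu : ℝ}
    (h : (A - (lam : ℂ) • B).PosSemidef) (hlm : mu ≤ lam) :
    (A - (mu : ℂ) • B).PosSemidef := by
  have h2 : (A - (mu : ℂ) • B) = (A - (lam : ℂ) • B) + (((lam - mu : ℝ)) : ℂ) • B := by
    push_cast
    module
  rw [h2]
  exact h.add (psd_smul_real hB (by linarith))

lemma forward_core {ρ₁' ρ₂' ξ₁ ξ₂ : Matrix (Fin k) (Fin k) ℂ}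
    (hρ₁'tr : ρ₁'.trace = 1) (hρ₂'tr : ρ₂'.trace = 1)
    (hξ₁ : ξ₁.PosSemidef) (hξ₂ : ξ₂.PosSemidef)
    {p q : ℝ} (hp1 : p ≤ 1) (hq0 : 0 ≤ q) (hpq : q < p)
    (heq1 : (p : ℂ) • ξ₁ + (((1 - p : ℝ)) : ℂ) • ξ₂ = ρ₁')
    (heq2 : (q : ℂ) • ξ₁ + (((1 - q : ℝ)) : ℂ) • ξ₂ = ρ₂') :
    supRatio ρ₁' ρ₂' * q ≤ p ∧ 1 - infRatio ρ₁' ρ₂' ≤ p - infRatio ρ₁' ρ₂' * q := by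
  have hq1 : q < 1 := lt_of_lt_of_le hpq hp1
  constructor
  · rcases eq_or_lt_of_le hq0 with hq | hq
    · -- q = 0
      have hM : supRatio ρ₁' ρ₂' * q = 0 := by rw [← hq, mul_zero]
      rw [hM]
      linarith
    · -- q > 0
      have hmem : (((p / q : ℝ)) : ℂ) • ρ₂' - ρ₁' ∈
          {M : Matrix (Fin k) (Fin k) ℂ | True} := trivial
      have hps : ((((p / q : ℝ)) : ℂ) • ρ₂' - ρ₁')
          = (((((p - q) / q : ℝ))) : ℂ) • ξ₂ := by
        rw [← heq1, ← heq2]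
        push_cast
        match_scalars
        · field_simp
          ring
        · field_simp
          ring
      have hpsd : ((((p / q : ℝ)) : ℂ) • ρ₂' - ρ₁').PosSemidef := by
        rw [hps]
        exact psd_smul_real hξ₂ (div_nonneg (by linarith) hq0)
      have hbdd : BddBelow {lam : ℝ | ((lam : ℂ) • ρ₂' - ρ₁').PosSemidef} :=
        ⟨1, fun lam hlam => SM_mem_ge_one hρ₁'tr hρ₂'tr hlam⟩
      have hle : supRatio ρ₁' ρ₂' ≤ p / q := csInf_le hbdd hpsd
      calc supRatio ρ₁' ρ₂' * q ≤ (p / q) * q := by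
            exact mul_le_mul_of_nonneg_right hle hq0
        _ = p := div_mul_cancel₀ p (ne_of_gt hq)
  · -- m' part
    have hcq : (1 : ℂ) - (q : ℂ) ≠ 0 := by
      have h0 : ((1 - q : ℝ) : ℂ) ≠ 0 := Complex.ofReal_ne_zero.mpr (by linarith)
      push_cast at h0
      exact h0
    have hps : (ρ₁' - ((((1 - p) / (1 - q) : ℝ)) : ℂ) • ρ₂')
        = (((((p - q) / (1 - q) : ℝ))) : ℂ) • ξ₁ := by
      rw [← heq1, ← heq2]
      push_cast
      match_scalars
      all_goals (field_simp [hcq]; try ring)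
    have hpsd : (ρ₁' - ((((1 - p) / (1 - q) : ℝ)) : ℂ) • ρ₂').PosSemidef := by
      rw [hps]
      apply psd_smul_real hξ₁
      apply div_nonneg (by linarith) (by linarith)
    have hbdd : BddAbove {lam : ℝ | (ρ₁' - (lam : ℂ) • ρ₂').PosSemidef} :=
      ⟨1, fun lam hlam => Sm_mem_le_one hρ₁'tr hρ₂'tr hlam⟩
    have hle : (1 - p) / (1 - q) ≤ infRatio ρ₁' ρ₂' := le_csSup hbdd hpsd
    have h3 : (1 - p) / (1 - q) * (1 - q) ≤ infRatio ρ₁' ρ₂' * (1 - q) :=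
      mul_le_mul_of_nonneg_right hle (by linarith)
    rw [div_mul_cancel₀ _ (by linarith : (1 : ℝ) - q ≠ 0)] at h3
    linarith

lemma ker_incl_of_range {A B : Matrix (Fin k) (Fin k) ℂ} (hA : A.PosSemidef)
    (hB : B.IsHermitian)
    (hsupp : LinearMap.range (Matrix.toLin' A) ≤ LinearMap.range (Matrix.toLin' B)) :
    ∀ x, B *ᵥ x = 0 → A *ᵥ x = 0 := by
  intro x hx
  have hmem : A *ᵥ x ∈ LinearMap.range (Matrix.toLin' B) := by
    apply hsupp
    exact ⟨x, Matrix.toLin'_apply A x⟩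
  obtain ⟨y, hy⟩ := hmem
  rw [Matrix.toLin'_apply] at hy
  have hz : star x ⬝ᵥ A *ᵥ x = 0 := by
    rw [← hy, Matrix.dotProduct_mulVec, ← hB.eq, ← star_mulVec, hx]
    simp
  exact (hA.dotProduct_mulVec_zero_iff x).mp hz

lemma backward_core {ρ₁' ρ₂' : Matrix (Fin k) (Fin k) ℂ}
    (hρ₁' : ρ₁'.PosSemidef) (hρ₁'tr : ρ₁'.trace = 1)
    (hρ₂' : ρ₂'.PosSemidef) (hρ₂'tr : ρ₂'.trace = 1)
    (hne : ρ₁' ≠ ρ₂')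
    (hker : ∀ x, ρ₂' *ᵥ x = 0 → ρ₁' *ᵥ x = 0)
    {p q : ℝ} (hp0 : 0 ≤ p) (hp1 : p ≤ 1) (hq0 : 0 ≤ q) (hq1 : q ≤ 1)
    (h1 : supRatio ρ₁' ρ₂' * q ≤ p)
    (h2 : 1 - infRatio ρ₁' ρ₂' ≤ p - infRatio ρ₁' ρ₂' * q) :
    ∃ ξ₁ ξ₂ : Matrix (Fin k) (Fin k) ℂ,
      ξ₁.PosSemidef ∧ ξ₁.trace = 1 ∧ ξ₂.PosSemidef ∧ ξ₂.trace = 1 ∧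
      (p : ℂ) • ξ₁ + (((1 - p : ℝ)) : ℂ) • ξ₂ = ρ₁' ∧
      (q : ℂ) • ξ₁ + (((1 - q : ℝ)) : ℂ) • ξ₂ = ρ₂' := by
  set M' := supRatio ρ₁' ρ₂' with hM'def
  set m' := infRatio ρ₁' ρ₂' with hm'def
  -- facts about M'
  have hSMne : {lam : ℝ | ((lam : ℂ) • ρ₂' - ρ₁').PosSemidef}.Nonempty := by
    obtain ⟨lam, hlam⟩ := exists_smul_sub_psd hρ₁' hρ₂'
      (fun h0 => by simp [h0] at hρ₂'tr) hker
    exact ⟨lam, hlam⟩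
  have hSMbdd : BddBelow {lam : ℝ | ((lam : ℂ) • ρ₂' - ρ₁').PosSemidef} :=
    ⟨1, fun lam hlam => SM_mem_ge_one hρ₁'tr hρ₂'tr hlam⟩
  have hM'mem : ((M' : ℂ) • ρ₂' - ρ₁').PosSemidef :=
    (isClosed_SM hρ₁'.1 hρ₂'.1).csInf_mem hSMne hSMbdd
  have hM'ge : 1 ≤ M' := le_csInf hSMne fun lam hlam => SM_mem_ge_one hρ₁'tr hρ₂'tr hlam
  have hM'gt : 1 < M' := by
    rcases eq_or_lt_of_le hM'ge with h | h
    · exfalso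
      have hpsd : (ρ₂' - ρ₁').PosSemidef := by
        have := hM'mem
        rw [← h] at this
        simpa using this
      have htr : (ρ₂' - ρ₁').trace = 0 := by
        rw [Matrix.trace_sub, hρ₁'tr, hρ₂'tr, sub_self]
      have h3 := psd_trace_zero hpsd htr
      have h4 : ρ₁' = ρ₂' := by linear_combination (norm := module) -h3
      exact hne h4
    · exact h
  -- facts about m'
  have hSmne : {lam : ℝ | (ρ₁' - (lam : ℂ) • ρ₂').PosSemidef}.Nonempty := by
    refine ⟨0, ?_⟩
    simpa using hρ₁'
  have hSmbdd : BddAbove {lam : ℝ | (ρ₁' - (lam : ℂ) • ρ₂').PosSemidef} :=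
    ⟨1, fun lam hlam => Sm_mem_le_one hρ₁'tr hρ₂'tr hlam⟩
  have hm'mem : (ρ₁' - (m' : ℂ) • ρ₂').PosSemidef :=
    (isClosed_Sm hρ₁'.1 hρ₂'.1).csSup_mem hSmne hSmbdd
  have hm'nn : 0 ≤ m' := le_csSup hSmbdd (by simpa using hρ₁')
  have hm'le : m' ≤ 1 := csSup_le hSmne fun lam hlam => Sm_mem_le_one hρ₁'tr hρ₂'tr hlam
  have hm'lt : m' < 1 := by
    rcases eq_or_lt_of_le hm'le with h | h
    · exfalso
      have hpsd : (ρ₁' - ρ₂').PosSemidef := by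
        have := hm'mem
        rw [h] at this
        simpa using this
      have htr : (ρ₁' - ρ₂').trace = 0 := by
        rw [Matrix.trace_sub, hρ₁'tr, hρ₂'tr, sub_self]
      have h3 := psd_trace_zero hpsd htr
      have h4 : ρ₁' = ρ₂' := by linear_combination (norm := module) h3
      exact hne h4
    · exact h
  -- p > q
  have hqp : q < p := by
    rcases eq_or_lt_of_le hq0 with h | h
    · rw [← h]
      rw [← h, mul_zero] at h2
      linarith
    · have : q < M' * q := by nlinarith
      linarith
  have hq1' : q < 1 := lt_of_lt_of_le hqp hp1
  have hpqne : ((p - q : ℝ) : ℂ) ≠ 0 := Complex.ofReal_ne_zero.mpr (by linarith)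
  have hcpq : (p : ℂ) - (q : ℂ) ≠ 0 := by push_cast at hpqne; exact hpqne
  have hc1q : (1 : ℂ) - (q : ℂ) ≠ 0 := by
    have h0 : ((1 - q : ℝ) : ℂ) ≠ 0 := Complex.ofReal_ne_zero.mpr (by linarith)
    push_cast at h0
    exact h0
  -- define ξ₁ ξ₂
  set ξ₁ : Matrix (Fin k) (Fin k) ℂ :=
    (((p - q)⁻¹ : ℝ) : ℂ) • ((((1 - q : ℝ)) : ℂ) • ρ₁' - (((1 - p : ℝ)) : ℂ) • ρ₂')
    with hξ₁def
  set ξ₂ : Matrix (Fin k) (Fin k) ℂ :=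
    (((p - q)⁻¹ : ℝ) : ℂ) • ((p : ℂ) • ρ₂' - (q : ℂ) • ρ₁') with hξ₂def
  have hξ₁psd : ξ₁.PosSemidef := by
    have hlam : (1 - p) / (1 - q) ≤ m' := by
      rw [div_le_iff₀ (by linarith : (0:ℝ) < 1 - q)]
      nlinarith
    have hmem2 : (ρ₁' - (((1 - p) / (1 - q) : ℝ) : ℂ) • ρ₂').PosSemidef :=
      Sm_down_closed hρ₂' hm'mem hlam
    have heq : ξ₁ = (((p - q)⁻¹ * (1 - q) : ℝ) : ℂ) •
        (ρ₁' - (((1 - p) / (1 - q) : ℝ) : ℂ) • ρ₂') := by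
      rw [hξ₁def]
      push_cast
      match_scalars
      all_goals (field_simp [hcpq, hc1q]; try ring)
    rw [heq]
    exact psd_smul_real hmem2 (mul_nonneg (inv_nonneg.mpr (by linarith)) (by linarith))
  have hξ₂psd : ξ₂.PosSemidef := by
    rcases eq_or_lt_of_le hq0 with h | h
    · have heq : ξ₂ = (((p - q)⁻¹ * p : ℝ) : ℂ) • ρ₂' := by
        rw [hξ₂def, ← h]
        push_cast
        match_scalars
        all_goals ring
      rw [heq]
      exact psd_smul_real hρ₂' (mul_nonneg (inv_nonneg.mpr (by linarith)) (by linarith))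
    · have hlam : M' ≤ p / q := by
        rw [le_div_iff₀ h]
        linarith
      have hmem2 : (((p / q : ℝ) : ℂ) • ρ₂' - ρ₁').PosSemidef :=
        SM_up_closed hρ₂' hM'mem hlam
      have heq : ξ₂ = (((p - q)⁻¹ * q : ℝ) : ℂ) •
          ((((p / q : ℝ)) : ℂ) • ρ₂' - ρ₁') := by
        rw [hξ₂def]
        push_cast
        match_scalars
        all_goals (field_simp [hcpq, hc1q]; try ring)
      rw [heq]
      exact psd_smul_real hmem2 (mul_nonneg (inv_nonneg.mpr (by linarith)) (by linarith))
  refine ⟨ξ₁, ξ₂, hξ₁psd, ?_, hξ₂psd, ?_, ?_, ?_⟩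
  · rw [hξ₁def, Matrix.trace_smul, Matrix.trace_sub, Matrix.trace_smul, Matrix.trace_smul,
      hρ₁'tr, hρ₂'tr]
    push_cast
    field_simp
    try ring
    have h' : (-(q:ℂ) + p) ≠ 0 := by rw [neg_add_eq_sub]; exact hcpq
    linear_combination mul_inv_cancel₀ h'
  · rw [hξ₂def, Matrix.trace_smul, Matrix.trace_sub, Matrix.trace_smul, Matrix.trace_smul,
      hρ₁'tr, hρ₂'tr]
    push_cast
    field_simp
    simp only [smul_eq_mul, mul_one]
    exact one_div_mul_cancel hcpq
  · rw [hξ₁def, hξ₂def]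
    push_cast
    match_scalars
    all_goals (field_simp [hcpq, hc1q]; try ring)
  · rw [hξ₁def, hξ₂def]
    push_cast
    match_scalars
    all_goals (field_simp [hcpq, hc1q]; try ring)

lemma trace_mul_psd_props {E ρ : Matrix (Fin k) (Fin k) ℂ} (hE : E.PosSemidef)
    (hE1 : ((1 : Matrix (Fin k) (Fin k) ℂ) - E).PosSemidef) (hρ : ρ.PosSemidef)
    (hρtr : ρ.trace = 1) :
    (E * ρ).trace = (((E * ρ).trace.re : ℝ) : ℂ) ∧ 0 ≤ (E * ρ).trace.re ∧
      (E * ρ).trace.re ≤ 1 ∧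
      (((1 : Matrix (Fin k) (Fin k) ℂ) - E) * ρ).trace = (((1 - (E * ρ).trace.re : ℝ)) : ℂ) := by
  have t1 := psd_mul_trace_nonneg hE hρ
  rw [Complex.nonneg_iff] at t1
  have heq : (E * ρ).trace = (((E * ρ).trace.re : ℝ) : ℂ) :=
    Complex.ext (by simp) (by simp [t1.2])
  have h1E : (((1 : Matrix (Fin k) (Fin k) ℂ) - E) * ρ).trace = 1 - (E * ρ).trace := by
    rw [Matrix.sub_mul, Matrix.one_mul, Matrix.trace_sub, hρtr]
  have t2 := psd_mul_trace_nonneg hE1 hρ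
  rw [Complex.nonneg_iff, h1E] at t2
  have hle : (E * ρ).trace.re ≤ 1 := by
    have := t2.1
    simp [Complex.sub_re] at this
    linarith
  refine ⟨heq, t1.1, hle, ?_⟩
  rw [h1E]
  exact Complex.ext (by simp) (by simp [← t1.2])

lemma trace_effect_re (E ρ₁ ρ₂ : Matrix (Fin k) (Fin k) ℂ) (c : ℝ) :
    (E * (ρ₁ - (c : ℂ) • ρ₂)).trace.re = (E * ρ₁).trace.re - c * (E * ρ₂).trace.re := by
  rw [Matrix.mul_sub, Matrix.trace_sub, Matrix.mul_smul, Matrix.trace_smul, smul_eq_mul,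
    Complex.sub_re, Complex.re_ofReal_mul]


/-- Lemma 8 of the paper: with `M' = sup(ρ₁'/ρ₂')` and `m' = inf(ρ₁'/ρ₂')`, a
test-and-prepare channel `ℰ(ρ) = Tr[Eρ]ξ₁ + Tr[(𝟙-E)ρ]ξ₂` with `ℰ(ρ₁) = ρ₁'` and
`ℰ(ρ₂) = ρ₂'` exists if and only if there is an operator `0 ≤ E ≤ 𝟙` with
`Tr[E(ρ₁ - M'ρ₂)] ≥ 0` and `Tr[E(ρ₁ - m'ρ₂)] ≥ 1 - m'`. -/
theorem test_and_prepare_iff_effect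
    {n m : ℕ} (ρ₁ ρ₂ : Matrix (Fin n) (Fin n) ℂ) (ρ₁' ρ₂' : Matrix (Fin m) (Fin m) ℂ)
    (hρ₁ : ρ₁.PosSemidef) (hρ₁tr : ρ₁.trace = 1)
    (hρ₂ : ρ₂.PosSemidef) (hρ₂tr : ρ₂.trace = 1)
    (hρ₁' : ρ₁'.PosSemidef) (hρ₁'tr : ρ₁'.trace = 1)
    (hρ₂' : ρ₂'.PosSemidef) (hρ₂'tr : ρ₂'.trace = 1)
    (hne : ρ₁' ≠ ρ₂')
    (hsupp : LinearMap.range (Matrix.toLin' ρ₁') ≤ LinearMap.range (Matrix.toLin' ρ₂'))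
    (M' m' : ℝ) (hM' : M' = supRatio ρ₁' ρ₂') (hm' : m' = infRatio ρ₁' ρ₂') :
    (∃ (E : Matrix (Fin n) (Fin n) ℂ) (ξ₁ ξ₂ : Matrix (Fin m) (Fin m) ℂ),
        E.PosSemidef ∧ ((1 : Matrix (Fin n) (Fin n) ℂ) - E).PosSemidef ∧
        ξ₁.PosSemidef ∧ ξ₁.trace = 1 ∧ ξ₂.PosSemidef ∧ ξ₂.trace = 1 ∧
        (E * ρ₁).trace • ξ₁ + (((1 : Matrix (Fin n) (Fin n) ℂ) - E) * ρ₁).trace • ξ₂ = ρ₁' ∧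
        (E * ρ₂).trace • ξ₁ + (((1 : Matrix (Fin n) (Fin n) ℂ) - E) * ρ₂).trace • ξ₂ = ρ₂') ↔
      (∃ E : Matrix (Fin n) (Fin n) ℂ,
        E.PosSemidef ∧ ((1 : Matrix (Fin n) (Fin n) ℂ) - E).PosSemidef ∧
        0 ≤ (E * (ρ₁ - (M' : ℂ) • ρ₂)).trace.re ∧
        1 - m' ≤ (E * (ρ₁ - (m' : ℂ) • ρ₂)).trace.re) := by
  constructor
  · rintro ⟨E, ξ₁, ξ₂, hE, hE1, hξ₁, hξ₁t, hξ₂, hξ₂t, he1, he2⟩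
    obtain ⟨hp_eq, hp_nn, hp_le, hp_eq1⟩ := trace_mul_psd_props hE hE1 hρ₁ hρ₁tr
    obtain ⟨hq_eq, hq_nn, hq_le, hq_eq1⟩ := trace_mul_psd_props hE hE1 hρ₂ hρ₂tr
    set p : ℝ := (E * ρ₁).trace.re with hpdef
    set q : ℝ := (E * ρ₂).trace.re with hqdef
    have he1' : (p : ℂ) • ξ₁ + (((1 - p : ℝ)) : ℂ) • ξ₂ = ρ₁' := by
      rw [← he1, hp_eq, hp_eq1]
    have he2' : (q : ℂ) • ξ₁ + (((1 - q : ℝ)) : ℂ) • ξ₂ = ρ₂' := by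
      rw [← he2, hq_eq, hq_eq1]
    rcases lt_trichotomy q p with hlt | heq | hgt
    · obtain ⟨hA, hB⟩ := forward_core hρ₁'tr hρ₂'tr hξ₁ hξ₂ hp_le hq_nn hlt he1' he2'
      refine ⟨E, hE, hE1, ?_, ?_⟩
      · rw [hM', trace_effect_re]
        linarith
      · rw [hm', trace_effect_re]
        linarith
    · exfalso
      apply hne
      rw [← he1', ← he2', heq]
    · -- swap: use 1 - E
      have he1'' : ((1 - p : ℝ) : ℂ) • ξ₂ + (((1 - (1 - p) : ℝ)) : ℂ) • ξ₁ = ρ₁' := by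
        rw [← he1']
        push_cast
        module
      have he2'' : ((1 - q : ℝ) : ℂ) • ξ₂ + (((1 - (1 - q) : ℝ)) : ℂ) • ξ₁ = ρ₂' := by
        rw [← he2']
        push_cast
        module
      obtain ⟨hA, hB⟩ := forward_core hρ₁'tr hρ₂'tr hξ₂ hξ₁ (by linarith) (by linarith)
        (by linarith) he1'' he2''
      refine ⟨(1 : Matrix (Fin n) (Fin n) ℂ) - E, hE1, ?_, ?_, ?_⟩
      · rw [sub_sub_cancel]
        exact hE
      · rw [hM', trace_effect_re]
        have h1 : (((1 : Matrix (Fin n) (Fin n) ℂ) - E) * ρ₁).trace.re = 1 - p := by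
          rw [hp_eq1]
          simp
        have h2 : (((1 : Matrix (Fin n) (Fin n) ℂ) - E) * ρ₂).trace.re = 1 - q := by
          rw [hq_eq1]
          simp
        rw [h1, h2]
        linarith
      · rw [hm', trace_effect_re]
        have h1 : (((1 : Matrix (Fin n) (Fin n) ℂ) - E) * ρ₁).trace.re = 1 - p := by
          rw [hp_eq1]
          simp
        have h2 : (((1 : Matrix (Fin n) (Fin n) ℂ) - E) * ρ₂).trace.re = 1 - q := by
          rw [hq_eq1]
          simp
        rw [h1, h2]
        linarith
  · rintro ⟨E, hE, hE1, hc1, hc2⟩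
    obtain ⟨hp_eq, hp_nn, hp_le, hp_eq1⟩ := trace_mul_psd_props hE hE1 hρ₁ hρ₁tr
    obtain ⟨hq_eq, hq_nn, hq_le, hq_eq1⟩ := trace_mul_psd_props hE hE1 hρ₂ hρ₂tr
    set p : ℝ := (E * ρ₁).trace.re with hpdef
    set q : ℝ := (E * ρ₂).trace.re with hqdef
    rw [hM', trace_effect_re] at hc1
    rw [hm', trace_effect_re] at hc2
    have hker := ker_incl_of_range hρ₁' hρ₂'.1 hsupp
    obtain ⟨ξ₁, ξ₂, hξ₁, hξ₁t, hξ₂, hξ₂t, he1, he2⟩ :=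
      backward_core hρ₁' hρ₁'tr hρ₂' hρ₂'tr hne hker hp_nn hp_le hq_nn hq_le
        (by linarith) (by linarith)
    refine ⟨E, ξ₁, ξ₂, hE, hE1, hξ₁, hξ₁t, hξ₂, hξ₂t, ?_, ?_⟩
    · rw [hp_eq, hp_eq1]
      exact he1
    · rw [hq_eq, hq_eq1]
      exact he2
end
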